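/- arXiv:0806.4139 — 5 statements merged into one kernel-verified Lean document; each statement's English description precedes it below -/
import Mathlib

section
/- If h ∈ C²(ℝ) is a bounded solution of h''(t) = W'(h(t)) for all t ∈ ℝ, then for every t ∈ ℝ one has −W(inf_ℝ h) = −W(sup_ℝ h) = |h'(t)|²/2 − W(h(t)). -/
open Set Filter Topology



/-- A double-well potential as in the paper: `W ∈ C²`, even, `W(±1) = 0 ≤ W`,
`W''(0) ≠ 0`, `W''(±1) ≠ 0`, and `W'(s) = 0` iff `s ∈ {−1, 0, +1}`. -/
def DoubleWell (W : ℝ → ℝ) : Prop :=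
  ContDiff ℝ 2 W ∧ (∀ r : ℝ, W (-r) = W r) ∧ W 1 = 0 ∧ W (-1) = 0 ∧ (∀ r : ℝ, 0 ≤ W r) ∧
    deriv (deriv W) 0 ≠ 0 ∧ deriv (deriv W) 1 ≠ 0 ∧ deriv (deriv W) (-1) ≠ 0 ∧
    (∀ s : ℝ, deriv W s = 0 ↔ s = -1 ∨ s = 0 ∨ s = 1)

/-- Key growth lemma: a bounded-above `C¹` function whose derivative is large wherever
the function is close to the bound cannot have positive derivative at a near-sup point. -/
lemma grow_contra (g : ℝ → ℝ) (hg : Differentiable ℝ g) (hg' : Continuous (deriv g))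
    (M r δ s : ℝ) (hr : 0 < r) (hbd : ∀ t, g t ≤ M) (hs : M - δ < g s)
    (hbig : ∀ u, M - δ < g u → r ^ 2 ≤ (deriv g u) ^ 2)
    (hs' : 0 < deriv g s) : False := by
  have key : ∀ u, M - δ < g u → 0 ≤ deriv g u → r ≤ deriv g u := by
    intro u hu hu'
    have h2 := hbig u hu
    nlinarith [sq_nonneg (deriv g u - r), sq_nonneg (deriv g u + r)]
  -- First: derivative stays positive on [s, ∞)
  have hpos : ∀ t, s ≤ t → 0 < deriv g t := by
    by_contra hB
    push_neg at hB
    set B : Set ℝ := {t | s ≤ t ∧ deriv g t ≤ 0} with hBdef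
    have hBne : B.Nonempty := by
      obtain ⟨t, ht, ht'⟩ := hB
      exact ⟨t, ht, ht'⟩
    have hBclosed : IsClosed B := by
      have : B = Ici s ∩ (deriv g) ⁻¹' (Iic 0) := by
        ext x; simp [hBdef, Set.mem_setOf_eq]
      rw [this]
      exact isClosed_Ici.inter (isClosed_Iic.preimage hg')
    have hBbdd : BddBelow B := ⟨s, fun x hx => hx.1⟩
    set t₀ := sInf B with ht₀def
    have ht₀B : t₀ ∈ B := hBclosed.csInf_mem hBne hBbdd
    have hst₀ : s < t₀ := by
      rcases (ht₀B.1 : s ≤ t₀).lt_or_eq with h | h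
      · exact h
      · exact absurd (h ▸ ht₀B.2) (not_le.mpr hs')
    have hlt : ∀ u, s ≤ u → u < t₀ → 0 < deriv g u := by
      intro u hsu hut
      by_contra hc
      push_neg at hc
      exact absurd (csInf_le hBbdd ⟨hsu, hc⟩) (not_le.mpr hut)
    -- g is strictly monotone on [s, t₀]
    have hmono : StrictMonoOn g (Icc s t₀) := by
      apply strictMonoOn_of_deriv_pos (convex_Icc s t₀) hg.continuous.continuousOn
      intro x hx
      rw [interior_Icc] at hx
      exact hlt x hx.1.le hx.2
    have hgt₀ : M - δ < g t₀ := lt_of_lt_of_le hs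
      (hmono.monotoneOn ⟨le_refl s, hst₀.le⟩ ⟨hst₀.le, le_refl t₀⟩ hst₀.le)
    -- deriv g t₀ ≥ 0 by continuity from the left
    have hnonneg : 0 ≤ deriv g t₀ := by
      have htend : Tendsto (deriv g) (𝓝[<] t₀) (𝓝 (deriv g t₀)) :=
        (hg'.tendsto t₀).mono_left nhdsWithin_le_nhds
      refine ge_of_tendsto htend ?_
      filter_upwards [Ioo_mem_nhdsLT_of_mem (show t₀ ∈ Ioc s t₀ from ⟨hst₀, le_refl _⟩)]
        with u hu
      exact (hlt u hu.1.le hu.2).le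
    have : r ≤ deriv g t₀ := key t₀ hgt₀ hnonneg
    linarith [ht₀B.2]
  -- hence g grows at least linearly, contradiction with boundedness
  have hmono2 : MonotoneOn g (Ici s) := by
    apply monotoneOn_of_deriv_nonneg (convex_Ici s) hg.continuous.continuousOn
      hg.differentiableOn
    intro x hx
    rw [interior_Ici] at hx
    exact (hpos x hx.le).le
  have hbig2 : ∀ t, s ≤ t → r ≤ deriv g t := by
    intro t hst
    exact key t (lt_of_lt_of_le hs (hmono2 (self_mem_Ici) hst hst)) (hpos t hst).le
  -- φ t = g t - r * t is monotone on [s, ∞)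
  have hφd : ∀ x : ℝ, HasDerivAt (fun t => g t - r * t) (deriv g x - r) x := by
    intro x
    have h1 : HasDerivAt (fun t : ℝ => r * t) (r * 1) x := (hasDerivAt_id x).const_mul r
    have h2 := (hg x).hasDerivAt.sub h1
    rw [mul_one] at h2
    exact h2
  have hφ : MonotoneOn (fun t => g t - r * t) (Ici s) := by
    apply monotoneOn_of_deriv_nonneg (convex_Ici s)
      (fun x _ => ((hφd x).differentiableAt).continuousAt.continuousWithinAt)
      (fun x _ => ((hφd x).differentiableAt).differentiableWithinAt)
    intro x hx
    rw [interior_Ici] at hx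
    rw [(hφd x).deriv]
    linarith [hbig2 x (le_of_lt hx)]
  set T := s + (M - g s + 1) / r with hT
  have hsT : s ≤ T := by
    have h1 : g s ≤ M := hbd s
    have h2 : 0 < M - g s + 1 := by linarith
    have : 0 ≤ (M - g s + 1) / r := by positivity
    rw [hT]
    linarith
  have hmon := hφ (self_mem_Ici) hsT hsT
  simp only at hmon
  have hTs : r * (T - s) = M - g s + 1 := by
    rw [hT]
    field_simp
    ring
  have hgT : g T ≤ M := hbd T
  nlinarith

/-- If the energy identity holds and `M` is (essentially) the supremum of `g`,
then `E + W M ≤ 0`. -/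
lemma key_le (W g : ℝ → ℝ) (hWc : Continuous W) (hg : Differentiable ℝ g)
    (hg' : Continuous (deriv g)) (E M : ℝ) (hbd : ∀ t, g t ≤ M)
    (hlub : ∀ δ : ℝ, 0 < δ → ∃ s, M - δ < g s)
    (henergy : ∀ t, (deriv g t) ^ 2 = 2 * E + 2 * W (g t)) : E + W M ≤ 0 := by
  by_contra hc
  push_neg at hc
  set c := E + W M with hcdef
  have hc2 : 0 < c / 2 := by linarith
  obtain ⟨δ, hδ, hδ'⟩ := Metric.continuousAt_iff.mp (hWc.continuousAt (x := M)) (c / 2) hc2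
  set r := Real.sqrt c with hrdef
  have hr : 0 < r := Real.sqrt_pos.mpr hc
  have hr2 : r ^ 2 = c := Real.sq_sqrt hc.le
  have hbig : ∀ u, M - δ < g u → r ^ 2 ≤ (deriv g u) ^ 2 := by
    intro u hu
    have hdist : dist (g u) M < δ := by
      rw [Real.dist_eq, abs_lt]
      constructor <;> [linarith; linarith [hbd u]]
    have := hδ' hdist
    rw [Real.dist_eq, abs_lt] at this
    have h1 := henergy u
    rw [hr2]
    linarith [this.1]
  obtain ⟨s, hs⟩ := hlub δ hδ
  have hne : deriv g s ≠ 0 := by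
    intro h0
    have := hbig s hs
    rw [h0] at this
    nlinarith
  rcases hne.lt_or_gt with hneg | hpos
  · -- apply grow_contra to g ∘ neg
    set g1 : ℝ → ℝ := fun t => g (-t) with hg1def
    have hg1 : Differentiable ℝ g1 := hg.comp differentiable_neg
    have hd1 : ∀ t, deriv g1 t = -deriv g (-t) := fun t => deriv_comp_neg g t
    have hg1' : Continuous (deriv g1) := by
      have : deriv g1 = fun t => -deriv g (-t) := funext hd1
      rw [this]
      exact (hg'.comp continuous_neg).neg
    refine grow_contra g1 hg1 hg1' M r δ (-s) hr (fun t => hbd (-t)) ?_ ?_ ?_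
    · simpa [hg1def] using hs
    · intro u hu
      rw [hd1]
      simpa using hbig (-u) hu
    · rw [hd1, neg_neg]
      linarith
  · exact grow_contra g hg hg' M r δ s hr hbd hs hbig hpos

/-- If `h ∈ C²(ℝ)` is a bounded solution of `h'' = W'(h)`, then for every `t`,
`−W(inf_ℝ h) = −W(sup_ℝ h) = |h'(t)|²/2 − W(h(t))`. -/
theorem first_integral_value (W h : ℝ → ℝ) (hW : DoubleWell W) (hh : ContDiff ℝ 2 h)
    (hbd : ∃ M : ℝ, ∀ t : ℝ, |h t| ≤ M)
    (hode : ∀ t : ℝ, deriv (deriv h) t = deriv W (h t)) :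
    ∀ t : ℝ, -W (sInf (Set.range h)) = (deriv h t) ^ 2 / 2 - W (h t) ∧
      -W (sSup (Set.range h)) = (deriv h t) ^ 2 / 2 - W (h t) := by
  obtain ⟨hWsm, hWeven, -, -, -, -, -, -, -⟩ := hW
  have hWd : Differentiable ℝ W := hWsm.differentiable (by norm_num)
  have hhd : Differentiable ℝ h := hh.differentiable (by norm_num)
  have hh1 : ContDiff ℝ 1 (deriv h) := by
    have : ContDiff ℝ (1 + 1 : ℕ) h := by exact_mod_cast hh
    exact (contDiff_succ_iff_deriv.mp (by exact_mod_cast this)).2.2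
  have hh1d : Differentiable ℝ (deriv h) := hh1.differentiable (by norm_num)
  have hh1c : Continuous (deriv h) := hh1d.continuous
  -- energy is constant
  set F : ℝ → ℝ := fun t => (deriv h t) ^ 2 / 2 - W (h t) with hFdef
  have hF : ∀ t, HasDerivAt F 0 t := by
    intro t
    have h1 : HasDerivAt (deriv h) (deriv (deriv h) t) t := (hh1d t).hasDerivAt
    have h2 : HasDerivAt (fun u => (deriv h u) ^ 2 / 2)
        ((2 : ℕ) * (deriv h t) ^ 1 * deriv (deriv h) t / 2) t := (h1.pow 2).div_const 2
    have h3 : HasDerivAt (fun u => W (h u)) (deriv W (h t) * deriv h t) t :=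
      (hWd (h t)).hasDerivAt.comp t (hhd t).hasDerivAt
    have h4 := h2.sub h3
    have : (2 : ℕ) * (deriv h t) ^ 1 * deriv (deriv h) t / 2 - deriv W (h t) * deriv h t = 0 := by
      rw [hode t]; ring
    rwa [this] at h4
  obtain ⟨E, hE⟩ : ∃ E : ℝ, ∀ t, deriv h t ^ 2 / 2 - W (h t) = E :=
    ⟨F 0, fun t => is_const_of_deriv_eq_zero (fun x => (hF x).differentiableAt)
      (fun x => (hF x).deriv) t 0⟩
  have henergy : ∀ t, (deriv h t) ^ 2 = 2 * E + 2 * W (h t) := by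
    intro t
    linarith [hE t]
  obtain ⟨M₀, hM₀⟩ := hbd
  have hne : (Set.range h).Nonempty := ⟨h 0, Set.mem_range_self 0⟩
  have hba : BddAbove (Set.range h) := ⟨M₀, by rintro x ⟨t, rfl⟩; exact (abs_le.mp (hM₀ t)).2⟩
  have hbb : BddBelow (Set.range h) := ⟨-M₀, by rintro x ⟨t, rfl⟩; exact (abs_le.mp (hM₀ t)).1⟩
  set Ms := sSup (Set.range h) with hMs
  set ms := sInf (Set.range h) with hms
  clear_value Ms ms
  -- lower bounds: E + W(Ms) ≥ 0 and E + W(ms) ≥ 0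
  have hclosed : IsClosed {x : ℝ | 0 ≤ E + W x} := by
    have : {x : ℝ | 0 ≤ E + W x} = (fun x => E + W x) ⁻¹' Ici 0 := rfl
    rw [this]
    exact isClosed_Ici.preimage (continuous_const.add hWd.continuous)
  have hsub : Set.range h ⊆ {x : ℝ | 0 ≤ E + W x} := by
    rintro x ⟨t, rfl⟩
    have := henergy t
    have h2 : 0 ≤ (deriv h t) ^ 2 := sq_nonneg _
    simp only [Set.mem_setOf_eq]
    linarith
  have hclsub : closure (Set.range h) ⊆ {x : ℝ | 0 ≤ E + W x} :=
    hclosed.closure_subset_iff.mpr hsub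
  have hMge : 0 ≤ E + W Ms := hclsub (by rw [hMs]; exact csSup_mem_closure hne hba)
  have hmge : 0 ≤ E + W ms := hclsub (by rw [hms]; exact csInf_mem_closure hne hbb)
  -- upper bound at Ms
  have hMle : E + W Ms ≤ 0 := by
    refine key_le W h hWd.continuous hhd hh1c E Ms
      (fun t => by rw [hMs]; exact le_csSup hba (Set.mem_range_self t)) ?_ henergy
    intro δ hδ
    obtain ⟨x, ⟨t, rfl⟩, hx⟩ := exists_lt_of_lt_csSup hne (show Ms - δ < sSup (Set.range h) by rw [← hMs]; linarith)
    exact ⟨t, hx⟩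
  -- upper bound at ms : apply key_le to -h, using evenness of W
  have hmle : E + W ms ≤ 0 := by
    have hWm : W (-ms) = W ms := hWeven ms
    have hgd : Differentiable ℝ (fun t => -h t) := hhd.neg
    have hdneg : deriv (fun t => -h t) = fun t => -deriv h t := by
      funext t
      exact deriv.neg
    have hg'c : Continuous (deriv fun t => -h t) := by rw [hdneg]; exact hh1c.neg
    have h1 : E + W (-ms) ≤ 0 := by
      refine key_le W (fun t => -h t) hWd.continuous hgd hg'c E (-ms)
        (fun t => ?_) ?_ ?_
      · have : ms ≤ h t := by rw [hms]; exact csInf_le hbb (Set.mem_range_self t)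
        show -h t ≤ -ms
        linarith
      · intro δ hδ
        obtain ⟨x, ⟨t, rfl⟩, hx⟩ := exists_lt_of_csInf_lt hne (show sInf (Set.range h) < ms + δ by rw [← hms]; linarith)
        exact ⟨t, by show -ms - δ < -h t; linarith⟩
      · intro t
        rw [hdneg]
        simpa [hWeven (h t)] using henergy t
    rwa [hWm] at h1
  -- conclude
  intro t
  have h1 := henergy t
  constructor
  · have : E + W ms = 0 := le_antisymm hmle hmge
    linarith
  · have : E + W Ms = 0 := le_antisymm hMle hMge
    linarith
end

section
/- Let h ∈ C²(ℝ) solve h''(t) = W'(h(t)) for all t ∈ ℝ. If h has two distinct critical points, i.e. h'(a) = h'(b) = 0 for some a < b, then h is periodic with period 2(b − a), i.e. h(t + 2(b−a)) = h(t) for all t ∈ ℝ. -/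
open Set

/-- Reflection symmetry at a critical point. -/
lemma reflect_of_critical (W h : ℝ → ℝ) (hW : ContDiff ℝ 2 W) (hh : ContDiff ℝ 2 h)
    (hode : ∀ t : ℝ, deriv (deriv h) t = deriv W (h t))
    (c : ℝ) (hc : deriv h c = 0) : ∀ t : ℝ, h (2 * c - t) = h t := by
  have hh1 : Differentiable ℝ h := hh.differentiable (by norm_num)
  have hh' : ContDiff ℝ 1 (deriv h) := by
    have := (contDiff_succ_iff_deriv (n := 1)).mp hh
    exact this.2.2
  have hh'd : Differentiable ℝ (deriv h) := hh'.differentiable (by norm_num)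
  have hW' : ContDiff ℝ 1 (deriv W) := ((contDiff_succ_iff_deriv (n := 1)).mp hW).2.2
  have hW'd : Differentiable ℝ (deriv W) := hW'.differentiable (by norm_num)
  have hW'' : Continuous (deriv (deriv W)) := by
    have := (contDiff_succ_iff_deriv (n := 0)).mp hW'
    exact this.2.2.continuous
  intro t
  -- work on the interval Ioo (c - R) (c + R)
  set R : ℝ := |t - c| + 1 with hR
  have hRpos : 0 < R := by positivity
  have htmem : t ∈ Ioo (c - R) (c + R) := by
    constructor <;> [nlinarith [abs_nonneg (t - c), le_abs_self (t - c), neg_abs_le (t - c)];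
      nlinarith [abs_nonneg (t - c), le_abs_self (t - c), neg_abs_le (t - c)]]
  have hcmem : c ∈ Ioo (c - R) (c + R) := by constructor <;> linarith
  -- bound for h on the closed interval
  obtain ⟨M, hM⟩ := (isCompact_Icc (a := c - R) (b := c + R)).exists_bound_of_continuousOn
    hh1.continuous.continuousOn
  have hMnn : 0 ≤ M := le_trans (norm_nonneg _) (hM c ⟨by linarith, by linarith⟩)
  -- Lipschitz constant for deriv W on Icc (-M) M
  obtain ⟨C, hC⟩ := (isCompact_Icc (a := -M) (b := M)).exists_bound_of_continuousOn
    hW''.continuousOn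
  have hCnn : 0 ≤ C := le_trans (norm_nonneg _) (hC 0 ⟨by linarith, hMnn⟩)
  have hLip : LipschitzOnWith C.toNNReal (deriv W) (Icc (-M) M) := by
    apply (convex_Icc _ _).lipschitzOnWith_of_nnnorm_deriv_le (fun x _ => hW'd x)
    intro x hx
    rw [← NNReal.coe_le_coe, coe_nnnorm, Real.coe_toNNReal _ hCnn]
    exact hC x hx
  -- the vector field
  set v : ℝ → ℝ × ℝ → ℝ × ℝ := fun _ p => (p.2, deriv W p.1) with hv
  set s : ℝ → Set (ℝ × ℝ) := fun _ => Icc (-M) M ×ˢ (univ : Set ℝ) with hs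
  have hvLip : ∀ u : ℝ, LipschitzOnWith (max 1 C.toNNReal) (v u) (s u) := by
    intro u
    have h1 : LipschitzOnWith 1 (Prod.snd : ℝ × ℝ → ℝ) (s u) :=
      (LipschitzWith.prod_snd (α := ℝ) (β := ℝ)).lipschitzOnWith
    have h2 : LipschitzOnWith (C.toNNReal * 1) ((deriv W) ∘ Prod.fst) (s u) :=
      hLip.comp ((LipschitzWith.prod_fst (α := ℝ) (β := ℝ)).lipschitzOnWith)
        (fun p hp => by exact hp.1)
    rw [mul_one] at h2
    exact h1.prodMk h2
  set f : ℝ → ℝ × ℝ := fun u => (h u, deriv h u) with hf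
  set g : ℝ → ℝ × ℝ := fun u => (h (2 * c - u), -deriv h (2 * c - u)) with hg
  have hfd : ∀ u : ℝ, HasDerivAt f (v u (f u)) u := by
    intro u
    have := ((hh1 u).hasDerivAt).prodMk ((hh'd u).hasDerivAt)
    simpa [hf, hv, hode u] using this
  have hgd : ∀ u : ℝ, HasDerivAt g (v u (g u)) u := by
    intro u
    have hlin : HasDerivAt (fun x : ℝ => 2 * c - x) (-1) u := by
      simpa using (hasDerivAt_id u).const_sub (2 * c)
    have d1 : HasDerivAt (fun x => h (2 * c - x)) (deriv h (2 * c - u) * (-1)) u :=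
      (hh1 (2 * c - u)).hasDerivAt.comp u hlin
    have d2 : HasDerivAt (fun x => -deriv h (2 * c - x))
        (-(deriv (deriv h) (2 * c - u) * (-1))) u :=
      ((hh'd (2 * c - u)).hasDerivAt.comp u hlin).neg
    have := d1.prodMk d2
    simp only [mul_neg_one, neg_neg] at this
    simpa [hg, hv, hode (2 * c - u)] using this
  have key : EqOn f g (Ioo (c - R) (c + R)) := by
    apply ODE_solution_unique_of_mem_Ioo (fun u _ => hvLip u) hcmem
    · intro u hu
      refine ⟨hfd u, ?_, trivial⟩
      have := hM u ⟨hu.1.le, hu.2.le⟩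
      rw [Real.norm_eq_abs, abs_le] at this
      exact this
    · intro u hu
      refine ⟨hgd u, ?_, trivial⟩
      have hu' : 2 * c - u ∈ Icc (c - R) (c + R) := ⟨by linarith [hu.2], by linarith [hu.1]⟩
      have := hM _ hu'
      rw [Real.norm_eq_abs, abs_le] at this
      exact this
    · have hcc : 2 * c - c = c := by ring
      simp [hf, hg, Prod.ext_iff, hcc, hc]
  have h2 := congrArg Prod.fst (key htmem)
  simpa [hf, hg] using h2.symm

/-- If `h ∈ C²(ℝ)` solves `h'' = W'(h)` on `ℝ` and has two distinct critical
points `a < b`, then `h` is periodic with period `2(b − a)`. -/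
theorem periodic_of_two_critical_points (W h : ℝ → ℝ) (hW : ContDiff ℝ 2 W)
    (hh : ContDiff ℝ 2 h)
    (hode : ∀ t : ℝ, deriv (deriv h) t = deriv W (h t))
    (a b : ℝ) (hab : a < b) (ha : deriv h a = 0) (hb : deriv h b = 0) :
    ∀ t : ℝ, h (t + 2 * (b - a)) = h t := by
  have Ra := reflect_of_critical W h hW hh hode a ha
  have Rb := reflect_of_critical W h hW hh hode b hb
  intro t
  calc h (t + 2 * (b - a)) = h (2 * b - (2 * a - t)) := by ring_nf
    _ = h (2 * a - t) := Rb _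
    _ = h t := Ra _
end

section
/- Let h ∈ C²(ℝ) be a bounded solution of h''(t) = W'(h(t)) for all t ∈ ℝ. Suppose that h is either non-periodic, or that h is constant but not identically zero. Then W(inf_ℝ h) = W(sup_ℝ h) = 0. -/
open Set Filter Topology

private lemma cd2_diff {f : ℝ → ℝ} (hf : ContDiff ℝ 2 f) :
    Differentiable ℝ f ∧ Differentiable ℝ (deriv f) ∧ Continuous (deriv (deriv f)) := by
  have h2 : ContDiff ℝ ((1 : WithTop ℕ∞) + 1) f := by norm_num [hf]
  rw [contDiff_succ_iff_deriv] at h2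
  obtain ⟨hd, -, h1⟩ := h2
  rw [contDiff_one_iff_deriv] at h1
  exact ⟨hd, h1.1, h1.2⟩

private lemma energy (W h : ℝ → ℝ) (hW : ContDiff ℝ 2 W) (hh : ContDiff ℝ 2 h)
    (hode : ∀ t : ℝ, deriv (deriv h) t = deriv W (h t)) :
    ∀ t : ℝ, (deriv h t) ^ 2 = 2 * W (h t) + ((deriv h 0) ^ 2 - 2 * W (h 0)) := by
  obtain ⟨hh1, hh2, -⟩ := cd2_diff hh
  obtain ⟨hW1, hW2, -⟩ := cd2_diff hW
  set F : ℝ → ℝ := fun t => (deriv h t) ^ 2 - 2 * W (h t) with hF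
  have key : ∀ t, HasDerivAt F 0 t := by
    intro t
    have H1 : HasDerivAt (deriv h) (deriv (deriv h) t) t := (hh2 t).hasDerivAt
    have H2 : HasDerivAt h (deriv h t) t := (hh1 t).hasDerivAt
    have HW : HasDerivAt W (deriv W (h t)) (h t) := (hW1 (h t)).hasDerivAt
    have Hcomp : HasDerivAt (fun t => W (h t)) (deriv W (h t) * deriv h t) t :=
      HasDerivAt.comp t HW H2
    have Hall : HasDerivAt F (2 * deriv h t ^ 1 * deriv (deriv h) t - 2 * (deriv W (h t) * deriv h t)) t :=
      (H1.pow 2).sub (Hcomp.const_mul 2)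
    have : (2 * deriv h t ^ 1 * deriv (deriv h) t - 2 * (deriv W (h t) * deriv h t)) = 0 := by
      rw [hode]; ring
    rwa [this] at Hall
  have hconst : ∀ t, F t = F 0 := by
    intro t
    exact is_const_of_deriv_eq_zero (fun x => (key x).differentiableAt) (fun x => (key x).deriv) t 0
  intro t
  have := hconst t
  simp only [hF] at this
  linarith

private lemma unbounded_of_deriv_ge (f : ℝ → ℝ) (hf : Differentiable ℝ f) {r T B : ℝ}
    (hr : 0 < r) (hge : ∀ t, T ≤ t → r ≤ deriv f t) (hB : ∀ t, T ≤ t → f t ≤ B) : False := by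
  set g : ℝ → ℝ := fun t => f t - r * t with hg
  have hmono : MonotoneOn g (Ici T) := by
    apply monotoneOn_of_deriv_nonneg (convex_Ici T)
    · exact (hf.sub ((differentiable_id.const_mul r))).continuous.continuousOn
    · exact ((hf.sub ((differentiable_id.const_mul r))).differentiableOn).mono interior_subset
    · intro t ht
      rw [interior_Ici] at ht
      have : deriv g t = deriv f t - r := by
        have h1 : HasDerivAt g (deriv f t - r) t := by
          have := ((hf t).hasDerivAt).sub (((hasDerivAt_id t).const_mul r))
          rw [mul_one] at this; exact this
        exact h1.deriv
      rw [this]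
      have := hge t (le_of_lt ht)
      linarith
  set t₁ : ℝ := T + (B - f T + 1) / r with ht₁
  have hT1 : T ≤ t₁ := by
    have h1 : f T ≤ B := hB T le_rfl
    have h2 : 0 ≤ (B - f T + 1) / r := div_nonneg (by linarith) hr.le
    rw [ht₁]; linarith
  have := hmono (self_mem_Ici) (mem_Ici.mpr hT1) hT1
  have hr' : r * ((B - f T + 1) / r) = B - f T + 1 := by field_simp
  have hft₁ : f t₁ ≤ B := hB t₁ hT1
  simp only [hg, ht₁] at this
  nlinarith [this]

private lemma escape_aux (W h : ℝ → ℝ) (hh1 : Differentiable ℝ h)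
    (hh1c : Continuous (deriv h))
    (M : ℝ) (hM : ∀ t, h t ≤ M) {C d ε t₀ : ℝ}
    (hen : ∀ t, (deriv h t) ^ 2 = 2 * W (h t) + C)
    (hd : 0 < d) (hε : 0 < ε)
    (hlow : ∀ s, M - ε ≤ s → s ≤ M → d ≤ 2 * W s + C)
    (ht₀ : M - ε < h t₀) (hpos : 0 < deriv h t₀) : False := by
  set r : ℝ := Real.sqrt d with hr
  have hrpos : 0 < r := Real.sqrt_pos.mpr hd
  -- at any point with h t ∈ [M-ε, M], we have |deriv h t| ≥ r
  have habs : ∀ t, M - ε ≤ h t → r ≤ |deriv h t| := by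
    intro t ht
    have h1 : d ≤ (deriv h t) ^ 2 := by rw [hen]; exact hlow _ ht (hM t)
    calc r = Real.sqrt d := rfl
      _ ≤ Real.sqrt ((deriv h t) ^ 2) := Real.sqrt_le_sqrt h1
      _ = |deriv h t| := Real.sqrt_sq_eq_abs _
  have h0 : r ≤ deriv h t₀ := by
    have := habs t₀ ht₀.le
    rwa [abs_of_pos hpos] at this
  -- claim: deriv h t > r/2 for all t ≥ t₀
  have claim : ∀ t, t₀ ≤ t → r / 2 < deriv h t := by
    by_contra hcon
    push_neg at hcon
    set S : Set ℝ := {t | t₀ ≤ t ∧ deriv h t ≤ r / 2} with hS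
    have hSne : S.Nonempty := by
      obtain ⟨t, ht1, ht2⟩ := hcon
      exact ⟨t, ht1, ht2⟩
    have hScl : IsClosed S := by
      have : S = Ici t₀ ∩ (deriv h) ⁻¹' (Iic (r / 2)) := by
        ext t; simp [hS, mem_Ici, mem_Iic, mem_preimage]
      rw [this]
      exact isClosed_Ici.inter (isClosed_Iic.preimage hh1c)
    have hSbd : BddBelow S := ⟨t₀, fun t ht => ht.1⟩
    set τ : ℝ := sInf S with hτ
    have hτS : τ ∈ S := hScl.csInf_mem hSne hSbd
    have hτgt : t₀ < τ := by
      rcases lt_or_eq_of_le hτS.1 with h | h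
      · exact h
      · exfalso; have := hτS.2; rw [← h] at this; linarith
    have hIco : ∀ t, t ∈ Ico t₀ τ → r / 2 < deriv h t := by
      intro t ht
      by_contra hle
      push_neg at hle
      have : t ∈ S := ⟨ht.1, hle⟩
      have := csInf_le hSbd this
      exact absurd ht.2 (not_lt.mpr this)
    -- h is strictly monotone on [t₀, τ]
    have hmono : StrictMonoOn h (Icc t₀ τ) := by
      apply strictMonoOn_of_deriv_pos (convex_Icc _ _) hh1.continuous.continuousOn
      intro t ht
      rw [interior_Icc] at ht
      have := hIco t ⟨ht.1.le, ht.2⟩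
      linarith
    have hhτ : M - ε < h τ := lt_of_lt_of_le ht₀
      (le_of_lt (hmono (left_mem_Icc.mpr hτgt.le) (right_mem_Icc.mpr hτgt.le) hτgt))
    have habsτ : r ≤ |deriv h τ| := habs τ hhτ.le
    have hτle : deriv h τ ≤ r / 2 := hτS.2
    have hτneg : deriv h τ ≤ -r := by
      rcases abs_le_iff_mul_self_le.mp (le_refl |deriv h τ|) with _
      rcases le_or_gt 0 (deriv h τ) with hc | hc
      · exfalso; rw [abs_of_nonneg hc] at habsτ; linarith
      · rw [abs_of_neg hc] at habsτ; linarith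
    -- IVT : deriv h has a zero in (t₀, τ), giving an earlier element of S
    have : (0 : ℝ) ∈ Icc (deriv h τ) (deriv h t₀) := ⟨by linarith, by linarith⟩
    obtain ⟨σ, hσmem, hσ⟩ := intermediate_value_Icc' hτgt.le hh1c.continuousOn this
    have hσS : σ ∈ S := ⟨hσmem.1, by rw [hσ]; linarith⟩
    have := csInf_le hSbd hσS
    have hστ : σ = τ := le_antisymm hσmem.2 this
    rw [hστ] at hσ
    rw [hσ] at hτneg
    linarith
  -- now escape
  exact unbounded_of_deriv_ge h hh1 (by linarith : (0:ℝ) < r / 2)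
    (fun t ht => (claim t ht).le) (fun t _ => hM t)

private lemma sup_energy (W h : ℝ → ℝ) (hWc : Continuous W)
    (hh1 : Differentiable ℝ h) (hh1c : Continuous (deriv h))
    (hbd : ∃ B : ℝ, ∀ t, |h t| ≤ B) {C : ℝ}
    (hen : ∀ t, (deriv h t) ^ 2 = 2 * W (h t) + C) :
    2 * W (sSup (Set.range h)) + C = 0 := by
  obtain ⟨B, hB⟩ := hbd
  have hne : (Set.range h).Nonempty := ⟨h 0, 0, rfl⟩
  have hbdd : BddAbove (Set.range h) := ⟨B, by rintro x ⟨t, rfl⟩; exact (abs_le.mp (hB t)).2⟩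
  set M : ℝ := sSup (Set.range h) with hM
  have hle : ∀ t, h t ≤ M := fun t => le_csSup hbdd ⟨t, rfl⟩
  have hcont : Continuous (fun s => 2 * W s + C) := by continuity
  rcases lt_trichotomy (2 * W M + C) 0 with hlt | heq | hgt
  · -- impossible: kinetic energy would be negative near the sup
    exfalso
    have : ∀ᶠ s in 𝓝 M, 2 * W s + C < 0 :=
      (hcont.continuousAt).eventually_lt_const hlt
    obtain ⟨ε, hε, hball⟩ := Metric.eventually_nhds_iff_ball.mp this
    obtain ⟨x, ⟨t, rfl⟩, hxt⟩ := exists_lt_of_lt_csSup hne (by linarith : M - ε < M)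
    have hmem : h t ∈ Metric.ball M ε := by
      rw [Metric.mem_ball, Real.dist_eq, abs_of_nonpos (by linarith [hle t])]
      linarith
    have := hball _ hmem
    have h2 := hen t
    nlinarith [sq_nonneg (deriv h t)]
  · exact heq
  · -- escape to infinity
    exfalso
    have : ∀ᶠ s in 𝓝 M, (2 * W M + C) / 2 < 2 * W s + C :=
      (hcont.continuousAt).eventually_const_lt (by linarith)
    obtain ⟨ε, hε, hball⟩ := Metric.eventually_nhds_iff_ball.mp this
    set d : ℝ := (2 * W M + C) / 2 with hd
    have hdpos : 0 < d := by positivity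
    have hlow : ∀ s, M - ε / 2 ≤ s → s ≤ M → d ≤ 2 * W s + C := by
      intro s h1 h2
      refine (hball s ?_).le
      rw [Metric.mem_ball, Real.dist_eq, abs_of_nonpos (by linarith)]
      linarith
    obtain ⟨x, ⟨t₀, rfl⟩, ht₀⟩ := exists_lt_of_lt_csSup hne (by linarith : M - ε / 2 < M)
    have hd2 : d ≤ (deriv h t₀) ^ 2 := by rw [hen]; exact hlow _ ht₀.le (hle t₀)
    have hne0 : deriv h t₀ ≠ 0 := by
      intro h0; rw [h0] at hd2; simp at hd2; linarith
    rcases hne0.lt_or_gt with hneg | hpos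
    · -- use time-reversed solution
      set g : ℝ → ℝ := fun t => h (-t) with hg
      have hg1 : Differentiable ℝ g := hh1.comp differentiable_neg
      have hgderiv : ∀ t, deriv g t = -deriv h (-t) := by
        intro t
        have : HasDerivAt g (deriv h (-t) * (-1)) t :=
          HasDerivAt.comp t ((hh1 (-t)).hasDerivAt) (hasDerivAt_neg t)
        simpa [mul_neg_one] using this.deriv
      have hg1c : Continuous (deriv g) := by
        have : deriv g = fun t => -deriv h (-t) := funext hgderiv
        rw [this]
        exact (hh1c.comp continuous_neg).neg
      have hgen : ∀ t, (deriv g t) ^ 2 = 2 * W (g t) + C := by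
        intro t; rw [hgderiv]; simpa using hen (-t)
      refine escape_aux W g hg1 hg1c M (fun t => hle (-t)) hgen hdpos
        (by linarith : (0:ℝ) < ε / 2) hlow (t₀ := -t₀) (by simpa [hg] using ht₀) ?_
      rw [hgderiv]; simp only [neg_neg]; linarith
    · exact escape_aux W h hh1 hh1c M hle hen hdpos (by linarith : (0:ℝ) < ε / 2) hlow ht₀ hpos

private lemma W_near0 (W : ℝ → ℝ) (hW : DoubleWell W) :
    ∃ r > 0, ∀ s : ℝ, s ≠ 0 → |s| < r → W s < W 0 := by
  obtain ⟨hW2, heven, hW1, hWm1, hWnn, hW''0, -, -, hcrit⟩ := hW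
  obtain ⟨hWd, hW'd, hW''c⟩ := cd2_diff hW2
  have hWc : Continuous W := hWd.continuous
  have hW'0 : deriv W 0 = 0 := (hcrit 0).mpr (Or.inr (Or.inl rfl))
  have hslope : Tendsto (slope (deriv W) 0) (𝓝[≠] 0) (𝓝 (deriv (deriv W) 0)) :=
    hasDerivAt_iff_tendsto_slope.mp (hW'd 0).hasDerivAt
  have hslope_eq : ∀ s : ℝ, slope (deriv W) 0 s = deriv W s / s := by
    intro s; rw [slope_def_field, hW'0]; ring_nf
  -- the second derivative at 0 is negative
  have hW''neg : deriv (deriv W) 0 < 0 := by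
    rcases hW''0.lt_or_gt with h | h
    · exact h
    exfalso
    have hev : ∀ᶠ s in 𝓝[≠] (0:ℝ), deriv (deriv W) 0 / 2 < slope (deriv W) 0 s :=
      hslope.eventually_const_lt (by linarith)
    have hev' : ∀ᶠ s in 𝓝[>] (0:ℝ), deriv (deriv W) 0 / 2 < slope (deriv W) 0 s :=
      hev.filter_mono (nhdsWithin_mono 0 (fun x hx => ne_of_gt hx))
    obtain ⟨u, hu, hsub⟩ := mem_nhdsGT_iff_exists_Ioo_subset.mp hev'
    have hu0 : (0:ℝ) < u := hu
    have hW'pos : ∀ s ∈ Ioo (0:ℝ) u, 0 < deriv W s := by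
      intro s hs
      have := hsub hs
      rw [Set.mem_setOf_eq, hslope_eq] at this
      have h2 : 0 < deriv W s / s := lt_trans (by linarith) this
      exact (div_pos_iff.mp h2).resolve_right (fun ⟨_, hs0⟩ => absurd hs.1 (not_lt.mpr hs0.le)) |>.1
    have hmono : StrictMonoOn W (Icc 0 u) := by
      apply strictMonoOn_of_deriv_pos (convex_Icc _ _) hWc.continuousOn
      intro s hs; rw [interior_Icc] at hs; exact hW'pos s hs
    set s₀ : ℝ := min u 1 / 2 with hs₀
    have hs₀pos : 0 < s₀ := by positivity
    have hs₀u : s₀ < u := by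
      rcases min_cases u 1 with ⟨h1, _⟩ | ⟨h1, h2⟩ <;> rw [hs₀, h1] <;> linarith
    have hs₀1 : s₀ < 1 := by
      rcases min_cases u 1 with ⟨h1, h2⟩ | ⟨h1, _⟩ <;> rw [hs₀, h1] <;> linarith
    have hWs₀ : W 0 < W s₀ :=
      hmono (left_mem_Icc.mpr hu0.le) ⟨hs₀pos.le, hs₀u.le⟩ hs₀pos
    obtain ⟨q, hqmem, hqmax⟩ := isCompact_Icc.exists_isMaxOn
      (nonempty_Icc.mpr zero_le_one) hWc.continuousOn
    have hq : ∀ x ∈ Icc (0:ℝ) 1, W x ≤ W q := hqmax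
    have hq₀ : W s₀ ≤ W q := hq s₀ ⟨hs₀pos.le, hs₀1.le⟩
    have hq0 : q ≠ 0 := by intro h; rw [h] at hq₀; linarith
    have hq1 : q ≠ 1 := by
      intro h; rw [h, hW1] at hq₀; have := hWnn 0; linarith
    have hqIoo : q ∈ Ioo (0:ℝ) 1 :=
      ⟨lt_of_le_of_ne hqmem.1 (Ne.symm hq0), lt_of_le_of_ne hqmem.2 hq1⟩
    have hlocal : IsLocalMax W q := hqmax.isLocalMax (Icc_mem_nhds hqIoo.1 hqIoo.2)
    have := (hcrit q).mp hlocal.deriv_eq_zero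
    rcases this with h | h | h <;> rw [h] at hqIoo <;>
      simp only [mem_Ioo] at hqIoo <;> linarith [hqIoo.1, hqIoo.2]
  -- now use negativity on both sides
  have hev : ∀ᶠ s in 𝓝[≠] (0:ℝ), slope (deriv W) 0 s < deriv (deriv W) 0 / 2 :=
    hslope.eventually_lt_const (by linarith)
  have hevR : ∀ᶠ s in 𝓝[>] (0:ℝ), slope (deriv W) 0 s < deriv (deriv W) 0 / 2 :=
    hev.filter_mono (nhdsWithin_mono 0 (fun x hx => ne_of_gt hx))
  have hevL : ∀ᶠ s in 𝓝[<] (0:ℝ), slope (deriv W) 0 s < deriv (deriv W) 0 / 2 :=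
    hev.filter_mono (nhdsWithin_mono 0 (fun x hx => ne_of_lt hx))
  obtain ⟨u, hu, hsubR⟩ := mem_nhdsGT_iff_exists_Ioo_subset.mp hevR
  obtain ⟨l, hl, hsubL⟩ := mem_nhdsLT_iff_exists_Ioo_subset.mp hevL
  have hu0 : (0:ℝ) < u := hu
  have hl0 : l < 0 := hl
  -- W decreasing on (0,u)
  have hanti : StrictAntiOn W (Icc 0 u) := by
    apply strictAntiOn_of_deriv_neg (convex_Icc _ _) hWc.continuousOn
    intro s hs; rw [interior_Icc] at hs
    have := hsubR hs
    rw [Set.mem_setOf_eq, hslope_eq] at this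
    have h2 : deriv W s / s < 0 := lt_trans this (by linarith)
    rcases div_neg_iff.mp h2 with ⟨_, h3⟩ | ⟨h3, _⟩
    · linarith [hs.1]
    · exact h3
  -- W increasing on (l,0)
  have hmono : StrictMonoOn W (Icc l 0) := by
    apply strictMonoOn_of_deriv_pos (convex_Icc _ _) hWc.continuousOn
    intro s hs; rw [interior_Icc] at hs
    have := hsubL hs
    rw [Set.mem_setOf_eq, hslope_eq] at this
    have h2 : deriv W s / s < 0 := lt_trans this (by linarith)
    rcases div_neg_iff.mp h2 with ⟨h3, _⟩ | ⟨_, h4⟩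
    · exact h3
    · exfalso; linarith [hs.2]
  refine ⟨min u (-l), lt_min hu0 (by linarith), fun s hs0 hsr => ?_⟩
  have habs := abs_lt.mp hsr
  have h1 : min u (-l) ≤ u := min_le_left _ _
  have h2 : min u (-l) ≤ -l := min_le_right _ _
  rcases hs0.lt_or_gt with hneg | hpos
  · have hls : l < s := by linarith [habs.1]
    exact hmono ⟨hls.le, hneg.le⟩ (right_mem_Icc.mpr hl0.le) hneg
  · have hsu : s < u := by linarith [habs.2]
    exact hanti (left_mem_Icc.mpr hu0.le) ⟨hpos.le, hsu.le⟩ hpos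

private lemma no_escape_forward (W h : ℝ → ℝ) (hW : DoubleWell W) (hh : ContDiff ℝ 2 h)
    (hbd' : ∃ B : ℝ, ∀ t, |deriv h t| ≤ B)
    (hode : ∀ t : ℝ, deriv (deriv h) t = deriv W (h t))
    {C : ℝ} (hen : ∀ t, (deriv h t) ^ 2 = 2 * W (h t) + C) (hC : C < 0)
    {m M : ℝ} (hm : ∀ t, m ≤ h t) (hM : ∀ t, h t ≤ M)
    (hWge : ∀ s, m < s → s < M → 0 ≤ 2 * W s + C)
    {T : ℝ} (hpos : ∀ t, T < t → 0 < deriv h t) : False := by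
  obtain ⟨hh1, hh2, hh2c⟩ := cd2_diff hh
  have hWcd := hW.1
  obtain ⟨hW1d, hW2d, hW2c⟩ := cd2_diff hWcd
  have hWc : Continuous W := hW1d.continuous
  have hW'c : Continuous (deriv W) := hW2d.continuous
  set T₁ : ℝ := T + 1 with hT₁
  have hmono : MonotoneOn h (Ici T₁) := by
    apply monotoneOn_of_deriv_nonneg (convex_Ici _) hh1.continuous.continuousOn
      (hh1.differentiableOn.mono interior_subset)
    intro t ht
    rw [interior_Ici] at ht
    exact (hpos t (by rw [mem_Ioi] at ht; linarith)).le
  have hne : (h '' Ici T₁).Nonempty := ⟨h T₁, mem_image_of_mem _ self_mem_Ici⟩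
  have hbddA : BddAbove (h '' Ici T₁) := ⟨M, by rintro x ⟨a, -, rfl⟩; exact hM a⟩
  set L : ℝ := sSup (h '' Ici T₁) with hL
  have hLle : ∀ t, T₁ ≤ t → h t ≤ L := fun t ht => le_csSup hbddA (mem_image_of_mem _ ht)
  have htend : Tendsto h atTop (𝓝 L) := by
    rw [tendsto_order]
    constructor
    · intro l hl
      obtain ⟨x, ⟨a, ha, rfl⟩, hx⟩ := exists_lt_of_lt_csSup hne hl
      filter_upwards [eventually_ge_atTop a] with t ht
      exact lt_of_lt_of_le hx (hmono ha (le_trans ha ht) ht)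
    · intro u hu
      filter_upwards [eventually_ge_atTop T₁] with t ht
      exact lt_of_le_of_lt (hLle t ht) hu
  have hLm : m ≤ L := le_trans (hm T₁) (hLle T₁ le_rfl)
  have hLM : L ≤ M := csSup_le hne (by rintro x ⟨a, -, rfl⟩; exact hM a)
  -- Step A : 2 * W L + C = 0
  have htendW : Tendsto (fun t => 2 * W (h t) + C) atTop (𝓝 (2 * W L + C)) := by
    have h1 : Tendsto (fun t => W (h t)) atTop (𝓝 (W L)) := (hWc.tendsto L).comp htend
    exact ((h1.const_mul 2).add_const C)
  have htendSq : Tendsto (fun t => (deriv h t) ^ 2) atTop (𝓝 (2 * W L + C)) :=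
    htendW.congr (fun t => (hen t).symm)
  have hWL : 2 * W L + C = 0 := by
    rcases lt_trichotomy (2 * W L + C) 0 with hlt | heq | hgt
    · exfalso
      obtain ⟨t, ht⟩ := (htendSq.eventually_lt_const hlt).exists
      nlinarith [sq_nonneg (deriv h t)]
    · exact heq
    · exfalso
      obtain ⟨T₂, hT₂⟩ := eventually_atTop.mp
        (htendSq.eventually_const_lt (by linarith : (2 * W L + C) / 2 < 2 * W L + C))
      set T₃ : ℝ := max T₂ T₁ with hT₃
      have hrpos : 0 < Real.sqrt ((2 * W L + C) / 2) := Real.sqrt_pos.mpr (by linarith)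
      refine unbounded_of_deriv_ge h hh1 (T := T₃) hrpos (fun t ht => ?_) (fun t _ => hM t)
      have h1 : (2 * W L + C) / 2 < (deriv h t) ^ 2 := hT₂ t (le_trans (le_max_left _ _) ht)
      have h2 : 0 < deriv h t := hpos t (by
        have := le_trans (le_max_right _ _) ht; rw [hT₁] at this; linarith)
      calc Real.sqrt ((2 * W L + C) / 2) ≤ Real.sqrt ((deriv h t) ^ 2) :=
            Real.sqrt_le_sqrt h1.le
        _ = |deriv h t| := Real.sqrt_sq_eq_abs _
        _ = deriv h t := abs_of_pos h2
  -- Step B : deriv W L = 0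
  have htend'' : Tendsto (fun t => deriv (deriv h) t) atTop (𝓝 (deriv W L)) := by
    have h1 : Tendsto (fun t => deriv W (h t)) atTop (𝓝 (deriv W L)) := (hW'c.tendsto L).comp htend
    exact h1.congr (fun t => (hode t).symm)
  have hW'L : deriv W L = 0 := by
    by_contra hne0
    rcases lt_or_gt_of_ne hne0 with ha | ha
    · -- deriv W L < 0 : eventually h'' < (deriv W L)/2 < 0, so -h' grows, but -h' ≤ 0
      obtain ⟨T₂, hT₂⟩ := eventually_atTop.mp
        (htend''.eventually_lt_const (by linarith : deriv W L < deriv W L / 2))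
      set T₄ : ℝ := max T₂ T₁ with hT₄
      refine unbounded_of_deriv_ge (fun t => -(deriv h t)) hh2.neg (T := T₄) (B := 0)
        (r := -(deriv W L) / 2) (by linarith) (fun t ht => ?_) (fun t ht => ?_)
      · rw [deriv.fun_neg]
        have := hT₂ t (le_trans (le_max_left _ _) ht)
        linarith
      · have h2 : T < t := by
          have := le_trans (le_max_right _ _) ht; rw [hT₁] at this; linarith
        have := hpos t h2
        simp only [neg_nonpos]
        linarith
    · -- deriv W L > 0 : h' grows without bound, contradicting |h'| ≤ B'
      obtain ⟨B', hB'⟩ := hbd'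
      obtain ⟨T₂, hT₂⟩ := eventually_atTop.mp
        (htend''.eventually_const_lt (by linarith : deriv W L / 2 < deriv W L))
      exact unbounded_of_deriv_ge (deriv h) hh2 (T := T₂) (by linarith : 0 < deriv W L / 2)
        (fun t ht => (hT₂ t ht).le) (fun t _ => (abs_le.mp (hB' t)).2)
  -- Step C : L is a critical point of W, leading to a contradiction
  have hcrit := hW.2.2.2.2.2.2.2.2
  rcases (hcrit L).mp hW'L with hL1 | hL0 | hL1
  · rw [hL1, hW.2.2.2.1] at hWL; linarith
  · -- L = 0
    obtain ⟨r, hr, hWr⟩ := W_near0 W hW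
    rw [hL0] at hWL hLm hLM
    -- so W 0 = -C/2 > 0 and m ≤ 0 ≤ M
    have hmM' : m < M := by
      by_contra hcon
      push_neg at hcon
      -- then m = M = 0 and h is constant 0; but deriv h > 0 on (T, ∞)
      have hm0 : m = 0 := le_antisymm hLm (by linarith)
      have hM0 : M = 0 := le_antisymm (by linarith) hLM
      have hconst : ∀ t, h t = 0 := fun t =>
        le_antisymm (by rw [← hM0]; exact hM t) (by rw [← hm0]; exact hm t)
      have : deriv h (T + 1) = 0 := by
        have : h = fun _ => (0 : ℝ) := funext hconst
        rw [this, deriv_const]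
      linarith [hpos (T + 1) (by linarith)]
    rcases lt_or_eq_of_le hLM with hMpos | hMeq
    · -- 0 < M : take a small positive s
      set s : ℝ := min r M / 2 with hs
      have hspos : 0 < s := by rw [hs]; positivity
      have hsr : s < r := by
        rcases min_cases r M with ⟨h1, -⟩ | ⟨h1, h2⟩ <;> rw [hs, h1] <;> linarith
      have hsM : s < M := by
        rcases min_cases r M with ⟨h1, h2⟩ | ⟨h1, -⟩ <;> rw [hs, h1] <;> linarith
      have hge := hWge s (lt_of_le_of_lt hLm hspos) hsM
      have hlt := hWr s (ne_of_gt hspos) (by rw [abs_of_pos hspos]; exact hsr)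
      linarith
    · -- M = 0 : take a small negative s
      have hmneg : m < 0 := by rw [← hMeq] at hmM'; exact hmM'
      set x : ℝ := max m (-r) with hx
      have hxneg : x < 0 := by
        rcases max_cases m (-r) with ⟨h1, -⟩ | ⟨h1, -⟩ <;> rw [hx, h1] <;> linarith
      set s : ℝ := x / 2 with hs
      have hsneg : s < 0 := by rw [hs]; linarith
      have hxs : x < s := by rw [hs]; linarith
      have hsm : m < s := lt_of_le_of_lt (le_max_left m (-r)) hxs
      have hsM : s < M := by rw [← hMeq]; exact hsneg
      have hsr : |s| < r := by
        rw [abs_of_neg hsneg]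
        have : -r ≤ x := le_max_right m (-r)
        linarith
      have hge := hWge s hsm hsM
      have hlt := hWr s (ne_of_lt hsneg) hsr
      linarith
  · rw [hL1, hW.2.2.1] at hWL; linarith

private lemma reflect (W h : ℝ → ℝ) (hW : ContDiff ℝ 2 W) (hh : ContDiff ℝ 2 h)
    (hbd : ∃ B : ℝ, ∀ t, |h t| ≤ B) (hbd' : ∃ B : ℝ, ∀ t, |deriv h t| ≤ B)
    (hode : ∀ t : ℝ, deriv (deriv h) t = deriv W (h t))
    {t₀ : ℝ} (h0 : deriv h t₀ = 0) : ∀ t : ℝ, h (2 * t₀ - t) = h t := by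
  obtain ⟨hh1, hh2, hh2c⟩ := cd2_diff hh
  obtain ⟨hW1, hW2, hW2c⟩ := cd2_diff hW
  obtain ⟨B, hB⟩ := hbd
  obtain ⟨B', hB'⟩ := hbd'
  have hBnn : 0 ≤ B := (abs_nonneg (h 0)).trans (hB 0)
  -- Lipschitz constant for `deriv W` on `[-B, B]`
  obtain ⟨K, hK⟩ := (isCompact_Icc (a := -B) (b := B)).exists_bound_of_continuousOn
    (hW2c.continuousOn (s := Icc (-B) B))
  have hK0 : 0 ≤ K := le_trans (norm_nonneg _) (hK (-B) (left_mem_Icc.mpr (by linarith)))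
  have hlipW : ∀ x ∈ Icc (-B) B, ∀ y ∈ Icc (-B) B, ‖deriv W y - deriv W x‖ ≤ K * ‖y - x‖ :=
    fun x hx y hy => Convex.norm_image_sub_le_of_norm_deriv_le (f := deriv W)
      (fun z _ => hW2 z) (fun z hz => hK z hz) (convex_Icc _ _) hx hy
  set v : ℝ → ℝ × ℝ → ℝ × ℝ := fun _ p => (p.2, deriv W p.1) with hv
  set sv : Set (ℝ × ℝ) := Icc (-B) B ×ˢ Icc (-B') B' with hsv
  set Kv : NNReal := Real.toNNReal (max 1 K) with hKv
  have hcoe : (Kv : ℝ) = max 1 K := Real.coe_toNNReal _ (le_trans zero_le_one (le_max_left _ _))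
  have hlip : ∀ t : ℝ, LipschitzOnWith Kv (v t) sv := by
    intro t
    rw [lipschitzOnWith_iff_dist_le_mul]
    rintro p hp q hq
    rw [hcoe, Prod.dist_eq]
    have hd1 : dist p.1 q.1 ≤ dist p q := by rw [Prod.dist_eq]; exact le_max_left _ _
    have hd2 : dist p.2 q.2 ≤ dist p q := by rw [Prod.dist_eq]; exact le_max_right _ _
    refine max_le ?_ ?_
    · have h1 : dist (v t p).1 (v t q).1 = dist p.2 q.2 := rfl
      rw [h1]
      calc dist p.2 q.2 ≤ dist p q := hd2
        _ ≤ max 1 K * dist p q := le_mul_of_one_le_left dist_nonneg (le_max_left _ _)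
    · have h2 : dist (v t p).2 (v t q).2 ≤ K * dist p.1 q.1 := by
        simp only [hv, Real.dist_eq]
        simpa [Real.norm_eq_abs] using hlipW q.1 hq.1 p.1 hp.1
      calc dist (v t p).2 (v t q).2 ≤ K * dist p.1 q.1 := h2
        _ ≤ K * dist p q := mul_le_mul_of_nonneg_left hd1 hK0
        _ ≤ max 1 K * dist p q := mul_le_mul_of_nonneg_right (le_max_right _ _) dist_nonneg
  -- the two solutions
  set f : ℝ → ℝ × ℝ := fun t => (h t, deriv h t) with hf
  set g : ℝ → ℝ × ℝ := fun t => (h (2 * t₀ - t), -deriv h (2 * t₀ - t)) with hg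
  have hfd : ∀ t, HasDerivAt f (v t (f t)) t := by
    intro t
    have : HasDerivAt f (deriv h t, deriv (deriv h) t) t :=
      ((hh1 t).hasDerivAt).prodMk ((hh2 t).hasDerivAt)
    have he : (deriv h t, deriv (deriv h) t) = v t (f t) := by
      simp only [hv, hf]; rw [hode t]
    rwa [he] at this
  have hinner : ∀ t : ℝ, HasDerivAt (fun t : ℝ => 2 * t₀ - t) (-1) t := by
    intro t
    simpa using (hasDerivAt_id t).const_sub (2 * t₀)
  have hgd : ∀ t, HasDerivAt g (v t (g t)) t := by
    intro t
    have H1 : HasDerivAt (fun t : ℝ => h (2 * t₀ - t)) (deriv h (2 * t₀ - t) * (-1)) t :=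
      HasDerivAt.comp t ((hh1 _).hasDerivAt) (hinner t)
    have H2 : HasDerivAt (fun t : ℝ => -deriv h (2 * t₀ - t))
        (-(deriv (deriv h) (2 * t₀ - t) * (-1))) t :=
      (HasDerivAt.comp t ((hh2 _).hasDerivAt) (hinner t)).neg
    have := H1.prodMk H2
    have he : (deriv h (2 * t₀ - t) * (-1), -(deriv (deriv h) (2 * t₀ - t) * (-1))) = v t (g t) := by
      simp only [hv, hg, mul_neg_one, neg_neg]
      rw [hode]
    rwa [he] at this
  have hfs : ∀ t : ℝ, f t ∈ sv := by
    intro t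
    exact ⟨abs_le.mp (hB t), abs_le.mp (hB' t)⟩
  have hgs : ∀ t : ℝ, g t ∈ sv := by
    intro t
    refine ⟨abs_le.mp (hB _), ?_⟩
    have := abs_le.mp (hB' (2 * t₀ - t))
    constructor <;> simp only [hg] <;> linarith [this.1, this.2]
  have hinit : f t₀ = g t₀ := by
    simp only [hf, hg]
    have : 2 * t₀ - t₀ = t₀ := by ring
    rw [this, h0, neg_zero]
  -- uniqueness on [t₀, b] for every b
  have hkey : ∀ t : ℝ, t₀ ≤ t → f t = g t := by
    intro t ht
    have := ODE_solution_unique_of_mem_Icc_right (v := v) (s := fun _ => sv) (fun u _ => hlip u)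
      (f := f) (g := g) (a := t₀) (b := t)
      (fun u _ => (hfd u).continuousAt.continuousWithinAt)
      (fun u _ => (hfd u).hasDerivWithinAt)
      (fun u _ => hfs u)
      (fun u _ => (hgd u).continuousAt.continuousWithinAt)
      (fun u _ => (hgd u).hasDerivWithinAt)
      (fun u _ => hgs u)
      hinit
    exact this (right_mem_Icc.mpr ht)
  intro t
  rcases le_or_gt t₀ t with ht | ht
  · have := congrArg Prod.fst (hkey t ht)
    simpa [hf, hg] using this.symm
  · have h2 : t₀ ≤ 2 * t₀ - t := by linarith
    have := congrArg Prod.fst (hkey _ h2)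
    simp only [hf, hg] at this
    have he : 2 * t₀ - (2 * t₀ - t) = t := by ring
    rw [he] at this
    exact this

/-- Let `h ∈ C²(ℝ)` be a bounded solution of `h'' = W'(h)`. If `h` is either
non-periodic, or constant but not identically zero, then `W(inf_ℝ h) = W(sup_ℝ h) = 0`. -/
theorem potential_vanishes_at_extrema (W h : ℝ → ℝ) (hW : DoubleWell W) (hh : ContDiff ℝ 2 h)
    (hbd : ∃ M : ℝ, ∀ t : ℝ, |h t| ≤ M)
    (hode : ∀ t : ℝ, deriv (deriv h) t = deriv W (h t))
    (hcase : (¬ ∃ T > (0 : ℝ), ∀ t : ℝ, h (t + T) = h t) ∨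
      (∃ c : ℝ, c ≠ 0 ∧ ∀ t : ℝ, h t = c)) :
    W (sInf (Set.range h)) = 0 ∧ W (sSup (Set.range h)) = 0 := by
  obtain ⟨hh1, hh2, hh2c⟩ := cd2_diff hh
  have hW2 := hW.1
  have heven := hW.2.1
  have hWnn := hW.2.2.2.2.1
  have hcrit := hW.2.2.2.2.2.2.2.2
  obtain ⟨hWd, hW'd, hW''c⟩ := cd2_diff hW2
  have hWc : Continuous W := hWd.continuous
  obtain ⟨B, hB⟩ := hbd
  set C : ℝ := (deriv h 0) ^ 2 - 2 * W (h 0) with hCdef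
  have hen : ∀ t, (deriv h t) ^ 2 = 2 * W (h t) + C := energy W h hW2 hh hode
  have hne : (Set.range h).Nonempty := ⟨h 0, 0, rfl⟩
  have hbddA : BddAbove (Set.range h) := ⟨B, by rintro x ⟨t, rfl⟩; exact (abs_le.mp (hB t)).2⟩
  have hbddB : BddBelow (Set.range h) := ⟨-B, by rintro x ⟨t, rfl⟩; exact (abs_le.mp (hB t)).1⟩
  set m : ℝ := sInf (Set.range h) with hm
  set M : ℝ := sSup (Set.range h) with hM
  have hmle : ∀ t, m ≤ h t := fun t => csInf_le hbddB ⟨t, rfl⟩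
  have hMle : ∀ t, h t ≤ M := fun t => le_csSup hbddA ⟨t, rfl⟩
  -- bound on the derivative
  have hbd' : ∃ B' : ℝ, ∀ t, |deriv h t| ≤ B' := by
    obtain ⟨K, hK⟩ := (isCompact_Icc (a := -B) (b := B)).exists_bound_of_continuousOn
      hWc.continuousOn
    refine ⟨Real.sqrt (2 * K + |C|), fun t => ?_⟩
    have h1 : (deriv h t) ^ 2 ≤ 2 * K + |C| := by
      have h2 := hK (h t) (abs_le.mp (hB t))
      rw [Real.norm_eq_abs] at h2
      have h3 := le_abs_self (W (h t))
      have h4 := le_abs_self C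
      rw [hen]
      linarith
    calc |deriv h t| = Real.sqrt ((deriv h t) ^ 2) := (Real.sqrt_sq_eq_abs _).symm
      _ ≤ Real.sqrt (2 * K + |C|) := Real.sqrt_le_sqrt h1
  -- energy at the sup and the inf
  have hsup : 2 * W M + C = 0 := sup_energy W h hWc hh1 hh2.continuous ⟨B, hB⟩ hen
  have hinf : 2 * W m + C = 0 := by
    set g : ℝ → ℝ := fun t => -h t with hg
    have hgderiv : deriv g = fun t => -(deriv h t) := funext (fun t => deriv.neg)
    have h1 : 2 * (fun s => W (-s)) (sSup (Set.range g)) + C = 0 := by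
      apply sup_energy (fun s => W (-s)) g (hWc.comp continuous_neg) hh1.neg
      · rw [hgderiv]; exact hh2.continuous.neg
      · exact ⟨B, fun t => by simpa [hg, abs_neg] using hB t⟩
      · intro t
        rw [hgderiv]
        simp only [hg, neg_neg, neg_sq]
        exact hen t
    have h2 : sSup (Set.range g) = -m := by
      have h3 : Set.range g = -(Set.range h) := by
        rw [← Set.image_neg_eq_neg]
        exact Set.range_comp Neg.neg h
      rw [h3, hm, Real.sInf_def, neg_neg]
    rw [h2] at h1
    simpa [neg_neg] using h1
  -- main reduction : C = 0
  have hC0 : C = 0 := by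
    by_contra hC0ne
    have hCneg : C < 0 := by
      rcases lt_or_gt_of_ne hC0ne with h1 | h1
      · exact h1
      · exfalso; have := hWnn M; linarith
    rcases hcase with hnp | ⟨c, hc0, hconst⟩
    · -- non-periodic case
      have hnonconst : ∃ t, h t ≠ h 0 := by
        by_contra hcon
        push_neg at hcon
        exact hnp ⟨1, one_pos, fun t => by rw [hcon (t + 1), hcon t]⟩
      have hmM : m < M := by
        obtain ⟨t', ht'⟩ := hnonconst
        rcases lt_or_eq_of_le (le_trans (hmle 0) (hMle 0)) with h1 | h1
        · exact h1
        · exfalso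
          have h2 : ∀ t, h t = h 0 := by
            intro t
            have := hmle t
            have := hMle t
            have := hmle 0
            have := hMle 0
            linarith
          exact ht' (h2 t')
      have hWge : ∀ s, m < s → s < M → 0 ≤ 2 * W s + C := by
        intro s h1 h2
        obtain ⟨x, ⟨u₁, rfl⟩, hx₁⟩ := exists_lt_of_csInf_lt hne h1
        obtain ⟨y, ⟨u₂, rfl⟩, hy₂⟩ := exists_lt_of_lt_csSup hne h2
        obtain ⟨t, ht⟩ := intermediate_value_univ u₁ u₂ hh1.continuous ⟨hx₁.le, hy₂.le⟩
        rw [← ht, ← hen]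
        exact sq_nonneg _
      -- there are turning points beyond any time
      have key : ∀ T : ℝ, ∃ t, T < t ∧ deriv h t = 0 := by
        intro T
        by_contra hcon
        push_neg at hcon
        have hsgn : (∀ t, T < t → 0 < deriv h t) ∨ (∀ t, T < t → deriv h t < 0) := by
          rcases lt_or_gt_of_ne (hcon (T + 1) (by linarith)) with hlt | hgt
          · right
            intro t ht
            rcases lt_or_gt_of_ne (hcon t ht) with h1 | h1
            · exact h1
            exfalso
            obtain ⟨σ, hσmem, hσ⟩ := intermediate_value_uIcc
              (hh2.continuous.continuousOn (s := uIcc (T+1) t))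
              (Set.mem_uIcc.mpr (Or.inl ⟨hlt.le, h1.le⟩))
            have hσT : T < σ := by
              have := hσmem.1
              rcases le_total (T+1) t with hc | hc
              · rw [uIcc_of_le hc] at hσmem; linarith [hσmem.1]
              · rw [uIcc_of_ge hc] at hσmem; linarith [hσmem.1]
            exact hcon σ hσT hσ
          · left
            intro t ht
            rcases lt_or_gt_of_ne (hcon t ht) with h1 | h1
            swap
            · exact h1
            exfalso
            obtain ⟨σ, hσmem, hσ⟩ := intermediate_value_uIcc
              (hh2.continuous.continuousOn (s := uIcc (T+1) t))
              (Set.mem_uIcc.mpr (Or.inr ⟨h1.le, hgt.le⟩))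
            have hσT : T < σ := by
              rcases le_total (T+1) t with hc | hc
              · rw [uIcc_of_le hc] at hσmem; linarith [hσmem.1]
              · rw [uIcc_of_ge hc] at hσmem; linarith [hσmem.1]
            exact hcon σ hσT hσ
        rcases hsgn with hp | hn
        · exact no_escape_forward W h hW hh hbd' hode hen hCneg hmle hMle hWge hp
        · -- apply to -h
          set g : ℝ → ℝ := fun t => -h t with hg
          have hgderiv : deriv g = fun t => -(deriv h t) := funext (fun t => deriv.neg)
          have hodd : ∀ s : ℝ, deriv W (-s) = -deriv W s := by
            intro s
            have h1 : HasDerivAt (fun s : ℝ => W (-s)) (deriv W (-s) * (-1)) s :=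
              HasDerivAt.comp s ((hWd (-s)).hasDerivAt) (hasDerivAt_neg s)
            have h2 : (fun s : ℝ => W (-s)) = W := funext heven
            rw [h2] at h1
            have h3 := h1.deriv
            linarith [h3]
          have hodeg : ∀ t, deriv (deriv g) t = deriv W (g t) := by
            intro t
            rw [hgderiv]
            have : deriv (fun t => -(deriv h t)) t = -(deriv (deriv h) t) := deriv.neg
            rw [this, hode, hg]
            simp only
            rw [hodd (h t)]
          have heng : ∀ t, (deriv g t) ^ 2 = 2 * W (g t) + C := by
            intro t
            rw [hgderiv]
            simp only [hg, neg_sq]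
            rw [heven (h t)]
            exact hen t
          refine no_escape_forward W g hW hh.neg ?_ hodeg heng hCneg
            (m := -M) (M := -m) (fun t => by simp only [hg]; linarith [hMle t])
            (fun t => by simp only [hg]; linarith [hmle t]) ?_ (T := T) ?_
          · obtain ⟨B', hB'⟩ := hbd'
            exact ⟨B', fun t => by rw [hgderiv]; simpa [abs_neg] using hB' t⟩
          · intro s h1 h2
            have := hWge (-s) (by linarith) (by linarith)
            rwa [heven s] at this
          · intro t ht
            rw [hgderiv]
            simp only
            linarith [hn t ht]
      obtain ⟨t₀, ht₀T, ht₀⟩ := key 0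
      obtain ⟨t₁, ht₁gt, ht₁⟩ := key t₀
      have R0 := reflect W h hW2 hh ⟨B, hB⟩ hbd' hode ht₀
      have R1 := reflect W h hW2 hh ⟨B, hB⟩ hbd' hode ht₁
      refine hnp ⟨2 * (t₁ - t₀), by linarith, fun t => ?_⟩
      have e1 := R1 (2 * t₀ - t)
      have e2 := R0 t
      have e3 : 2 * t₁ - (2 * t₀ - t) = t + 2 * (t₁ - t₀) := by ring
      rw [e3, e2] at e1
      exact e1
    · -- constant case
      exfalso
      have hh0 : h = fun _ => c := funext hconst
      have hd0 : ∀ t, deriv (deriv h) t = 0 := by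
        intro t
        rw [hh0]
        simp [deriv_const]
      have hW'c0 : deriv W c = 0 := by
        have := hode 0
        rw [hd0 0, hconst 0] at this
        exact this.symm
      have hWc0 : W c = 0 := by
        rcases (hcrit c).mp hW'c0 with h1 | h1 | h1
        · rw [h1]; exact hW.2.2.2.1
        · exact absurd h1 hc0
        · rw [h1]; exact hW.2.2.1
      have hmc : m = c := by
        rw [hm, hh0]
        simp [Set.range_const]
      rw [hmc, hWc0] at hinf
      linarith
  constructor
  · linarith [hinf]
  · linarith [hsup]
end

section
/- Let h ∈ C²(ℝ) solve h''(t) = W'(h(t)) for all t ∈ ℝ, with |h(t)| ≤ 1 for all t ∈ ℝ. If h is not periodic, then ∫_{−∞}^{+∞} |h'(t)| dt ≤ 4. -/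
open MeasureTheory Set NNReal

/-- If `h ∈ C²(ℝ)` solves `h'' = W'(h)` with `|h| ≤ 1` and `h` is not
periodic, then `∫_{−∞}^{+∞} |h'(t)| dt ≤ 4`. -/
theorem integral_deriv_le_four (W h : ℝ → ℝ) (hW : DoubleWell W) (hh : ContDiff ℝ 2 h)
    (hbd : ∀ t : ℝ, |h t| ≤ 1)
    (hode : ∀ t : ℝ, deriv (deriv h) t = deriv W (h t))
    (hnp : ¬ ∃ T > (0 : ℝ), ∀ t : ℝ, h (t + T) = h t) :
    ∫⁻ t : ℝ, ENNReal.ofReal |deriv h t| ≤ 4 := by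
  obtain ⟨hW2, -, -, -, hWnn, -⟩ := hW
  -- basic differentiability facts
  have hd1 : Differentiable ℝ h := hh.differentiable two_ne_zero
  have hh' : ContDiff ℝ 1 (deriv h) := by
    have : ContDiff ℝ ((1:ℕ)+1) h := by exact_mod_cast hh
    exact (contDiff_succ_iff_deriv.mp this).2.2
  have hd2 : Differentiable ℝ (deriv h) := hh'.differentiable one_ne_zero
  have hconth' : Continuous (deriv h) := hd2.continuous
  have hW1 : Differentiable ℝ W := hW2.differentiable two_ne_zero
  have hWd : ContDiff ℝ 1 (deriv W) := by
    have : ContDiff ℝ ((1:ℕ)+1) W := by exact_mod_cast hW2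
    exact (contDiff_succ_iff_deriv.mp this).2.2
  have hWd1 : Differentiable ℝ (deriv W) := hWd.differentiable one_ne_zero
  have hWddc : Continuous (deriv (deriv W)) := by
    rcases contDiff_one_iff_deriv.mp hWd with ⟨-, hc⟩
    exact hc
  have Hh : ∀ t, HasDerivAt h (deriv h t) t := fun t => (hd1 t).hasDerivAt
  have Hh' : ∀ t, HasDerivAt (deriv h) (deriv W (h t)) t := fun t =>
    hode t ▸ (hd2 t).hasDerivAt
  -- energy conservation
  have energy : ∀ s t : ℝ,
      (deriv h t)^2 - 2 * W (h t) = (deriv h s)^2 - 2 * W (h s) := by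
    have hE : ∀ t, HasDerivAt (fun u => (deriv h u)^2 - 2 * W (h u)) 0 t := by
      intro t
      have h2 : HasDerivAt (fun u => W (h u)) (deriv W (h t) * deriv h t) t :=
        (hW1 (h t)).hasDerivAt.comp t (Hh t)
      have hsum := ((Hh' t).pow 2).sub (h2.const_mul 2)
      exact hsum.congr_deriv (by ring)
    intro s t
    exact is_const_of_deriv_eq_zero (fun u => (hE u).differentiableAt)
      (fun u => (hE u).deriv) t s
  -- bound on deriv h
  obtain ⟨C, hC⟩ := isCompact_Icc.exists_bound_of_continuousOn
    (hW2.continuous.continuousOn (s := Icc (-1:ℝ) 1))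
  set M : ℝ := Real.sqrt ((deriv h 0)^2 + 2*C) with hMdef
  have hM : ∀ t, |deriv h t| ≤ M := by
    intro t
    apply Real.abs_le_sqrt
    have he := energy 0 t
    have h1 : W (h t) ≤ C := by
      have := hC (h t) (abs_le.mp (hbd t))
      rw [Real.norm_eq_abs] at this
      exact (le_abs_self _).trans this
    have h2 := hWnn (h 0)
    nlinarith
  -- the vector field and its Lipschitz property on a compact region
  set v : ℝ × ℝ → ℝ × ℝ := fun p => (p.2, deriv W p.1) with hvdef
  set Q : Set (ℝ × ℝ) := Icc (-1:ℝ) 1 ×ˢ Icc (-M) M with hQdef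
  obtain ⟨L0, hL0⟩ := isCompact_Icc.exists_bound_of_continuousOn
    (hWddc.continuousOn (s := Icc (-1:ℝ) 1))
  set L : ℝ≥0 := L0.toNNReal with hLdef
  have hWlip : LipschitzOnWith L (deriv W) (Icc (-1:ℝ) 1) := by
    apply (convex_Icc _ _).lipschitzOnWith_of_nnnorm_deriv_le
      (fun x _ => hWd1 x)
    intro x hx
    have h1 : ‖deriv (deriv W) x‖ ≤ L0 := hL0 x hx
    rw [← norm_toNNReal]
    exact Real.toNNReal_mono h1
  have hvlip : LipschitzOnWith (1 + L) v Q := by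
    rw [lipschitzOnWith_iff_dist_le_mul]
    intro p hp q hq
    have h1 : dist p.2 q.2 ≤ dist p q := le_max_right _ _
    have h2 : dist (deriv W p.1) (deriv W q.1) ≤ (L:ℝ) * dist p.1 q.1 :=
      lipschitzOnWith_iff_dist_le_mul.mp hWlip p.1 hp.1 q.1 hq.1
    have h3 : dist p.1 q.1 ≤ dist p q := le_max_left _ _
    have hL' : (0:ℝ) ≤ (L:ℝ) := L.coe_nonneg
    have hd0 : (0:ℝ) ≤ dist p q := dist_nonneg
    have hcoe : ((1 + L : ℝ≥0) : ℝ) = 1 + (L:ℝ) := by push_cast; ring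
    rw [hcoe, Prod.dist_eq]
    apply max_le
    · nlinarith
    · nlinarith
  -- membership of the trajectory
  have hmemF : ∀ u : ℝ, ((h u, deriv h u) : ℝ × ℝ) ∈ Q := by
    intro u
    exact ⟨abs_le.mp (hbd u), abs_le.mp (hM u)⟩
  -- reflection symmetry at a critical point of h
  have reflect : ∀ t1 : ℝ, deriv h t1 = 0 → ∀ s : ℝ, h (2*t1 - s) = h s := by
    intro t1 h1 s
    set R : ℝ := |s - t1| + 1 with hRdef
    have hR : s ∈ Ioo (t1 - R) (t1 + R) := by
      constructor <;> nlinarith [le_abs_self (s - t1), neg_abs_le (s - t1)]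
    have hRpos : (0:ℝ) < R := by positivity
    have ht1mem : t1 ∈ Ioo (t1 - R) (t1 + R) := by constructor <;> linarith
    have hσ : ∀ u : ℝ, HasDerivAt (fun u : ℝ => 2*t1 - u) (-1) u := by
      intro u
      simpa using (hasDerivAt_id u).const_sub (2*t1)
    have key : EqOn (fun u => ((h u, deriv h u) : ℝ × ℝ))
        (fun u => ((h (2*t1 - u), -deriv h (2*t1 - u)) : ℝ × ℝ))
        (Ioo (t1 - R) (t1 + R)) := by
      apply ODE_solution_unique_of_mem_Ioo (v := fun _ : ℝ => v) (s := fun _ : ℝ => Q)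
        (fun _ _ => hvlip) ht1mem
      · intro u _
        refine ⟨?_, hmemF u⟩
        have := (Hh u).prodMk (Hh' u)
        convert this using 1
      · intro u _
        constructor
        · have c1 : HasDerivAt (fun u : ℝ => h (2*t1 - u))
              (deriv h (2*t1 - u) * (-1)) u := (Hh (2*t1-u)).comp u (hσ u)
          have c2 : HasDerivAt (fun u : ℝ => deriv h (2*t1 - u))
              (deriv W (h (2*t1 - u)) * (-1)) u := (Hh' (2*t1-u)).comp u (hσ u)
          have := c1.prodMk c2.neg
          refine this.congr_deriv ?_
          simp only [hvdef]
          rw [Prod.mk.injEq]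
          constructor <;> ring
        · refine ⟨abs_le.mp (hbd _), ?_⟩
          have := abs_le.mp (hM (2*t1-u))
          constructor <;> simp <;> linarith [this.1, this.2]
      · have e : 2*t1 - t1 = t1 := by ring
        simp only [e, h1]
        norm_num
    have := key hR
    exact (congrArg Prod.fst this).symm
  -- h' has at most one zero
  have per : ∀ a b : ℝ, deriv h a = 0 → deriv h b = 0 →
      ∀ t : ℝ, h (t + 2*(b - a)) = h t := by
    intro a b ha hb t
    have e : t + 2*(b - a) = 2*b - (2*a - t) := by ring
    rw [e, reflect b hb, reflect a ha]
  have huniq : ∀ t1 t2 : ℝ, deriv h t1 = 0 → deriv h t2 = 0 → t1 = t2 := by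
    intro t1 t2 e1 e2
    by_contra hne
    apply hnp
    rcases lt_or_gt_of_ne hne with hlt | hlt
    · exact ⟨2*(t2 - t1), by linarith, per t1 t2 e1 e2⟩
    · exact ⟨2*(t1 - t2), by linarith, per t2 t1 e2 e1⟩
  -- sign of h' on zero-free intervals
  have hsign : ∀ a b : ℝ, (∀ t ∈ Ioo a b, deriv h t ≠ 0) →
      (∀ t ∈ Ioo a b, 0 ≤ deriv h t) ∨ (∀ t ∈ Ioo a b, deriv h t ≤ 0) := by
    intro a b hz
    by_cases hc : ∀ t ∈ Ioo a b, 0 ≤ deriv h t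
    · exact Or.inl hc
    push_neg at hc
    obtain ⟨x, hx, hxneg⟩ := hc
    right
    intro t ht
    by_contra hpos
    push_neg at hpos
    have hsub : uIcc x t ⊆ Ioo a b := (ordConnected_Ioo).uIcc_subset hx ht
    have h0 : (0:ℝ) ∈ uIcc (deriv h x) (deriv h t) :=
      mem_uIcc.mpr (Or.inl ⟨le_of_lt hxneg, le_of_lt hpos⟩)
    obtain ⟨z, hz', hz0⟩ := intermediate_value_uIcc (hconth'.continuousOn) h0
    exact hz z (hsub hz') hz0
  -- total variation on a zero-free interval is at most 2
  have key2 : ∀ a b : ℝ, a ≤ b → (∀ t ∈ Ioo a b, deriv h t ≠ 0) →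
      ∫ t in a..b, |deriv h t| ≤ 2 := by
    intro a b hab hz
    have hInt : IntervalIntegrable (deriv h) volume a b := hconth'.intervalIntegrable a b
    have hftc : ∫ t in a..b, deriv h t = h b - h a :=
      intervalIntegral.integral_deriv_eq_sub (fun t _ => hd1 t) hInt
    have hb2 : |h b - h a| ≤ 2 := by
      have ha' := abs_le.mp (hbd a)
      have hb' := abs_le.mp (hbd b)
      rw [abs_le]
      constructor <;> linarith [ha'.1, ha'.2, hb'.1, hb'.2]
    have hae : ∀ᵐ t ∂(volume : Measure ℝ), t ∈ Set.uIoc a b → t ∈ Ioo a b := by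
      have hb0 : (volume : Measure ℝ) {b} = 0 := measure_singleton b
      have hne : ∀ᵐ t ∂(volume : Measure ℝ), t ≠ b := by
        rw [ae_iff]
        convert hb0 using 2
        ext t
        simp
      filter_upwards [hne] with t htb hI
      rw [uIoc_of_le hab] at hI
      exact ⟨hI.1, lt_of_le_of_ne hI.2 htb⟩
    rcases hsign a b hz with hpos | hneg
    · have heq : ∫ t in a..b, |deriv h t| = ∫ t in a..b, deriv h t := by
        apply intervalIntegral.integral_congr_ae
        filter_upwards [hae] with t ht hI
        exact abs_of_nonneg (hpos t (ht hI))
      rw [heq, hftc]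
      exact (le_abs_self _).trans hb2
    · have heq : ∫ t in a..b, |deriv h t| = ∫ t in a..b, -(deriv h t) := by
        apply intervalIntegral.integral_congr_ae
        filter_upwards [hae] with t ht hI
        exact abs_of_nonpos (hneg t (ht hI))
      rw [heq, intervalIntegral.integral_neg, hftc]
      have := neg_abs_le (h b - h a)
      linarith
  -- total variation on any interval is at most 4
  have key4 : ∀ a b : ℝ, a ≤ b → ∫ t in a..b, |deriv h t| ≤ 4 := by
    intro a b hab
    by_cases hex : ∃ t0, deriv h t0 = 0
    · obtain ⟨t0, ht0⟩ := hex
      obtain ⟨c, hcdef⟩ : ∃ c : ℝ, c = max a (min t0 b) := ⟨_, rfl⟩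
      have hac : a ≤ c := hcdef ▸ le_max_left _ _
      have hcb : c ≤ b := hcdef ▸ max_le hab (min_le_right _ _)
      have hsplit : (∫ t in a..c, |deriv h t|) + ∫ t in c..b, |deriv h t|
          = ∫ t in a..b, |deriv h t| := by
        apply intervalIntegral.integral_add_adjacent_intervals <;>
          exact (hconth'.abs).intervalIntegrable _ _
      have k1 : ∫ t in a..c, |deriv h t| ≤ 2 := by
        apply key2 a c hac
        intro t ht hteq
        rw [huniq t t0 hteq ht0] at ht
        have : c ≤ t0 := hcdef ▸ max_le (le_of_lt ht.1) (min_le_left _ _)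
        linarith [ht.2]
      have k2 : ∫ t in c..b, |deriv h t| ≤ 2 := by
        apply key2 c b hcb
        intro t ht hteq
        rw [huniq t t0 hteq ht0] at ht
        have h1 : min t0 b ≤ c := hcdef ▸ le_max_right _ _
        have h2 : min t0 b = t0 := min_eq_left (le_of_lt ht.2)
        linarith [ht.1]
      rw [← hsplit]; linarith
    · push_neg at hex
      have := key2 a b hab (fun t _ => hex t)
      linarith
  -- pass to the Lebesgue integral over ℝ
  have habs_cont : Continuous fun t => |deriv h t| := hconth'.abs
  have hstep : ∀ n : ℕ, ∫⁻ t in Icc (-(n:ℝ)) n, ENNReal.ofReal |deriv h t| ≤ 4 := by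
    intro n
    have hn : (-(n:ℝ)) ≤ n := by
      have : (0:ℝ) ≤ n := Nat.cast_nonneg n
      linarith
    have hint : IntegrableOn (fun t => |deriv h t|) (Icc (-(n:ℝ)) n) volume :=
      habs_cont.integrableOn_Icc
    rw [← ofReal_integral_eq_lintegral_ofReal hint
      (Filter.Eventually.of_forall (fun t => abs_nonneg _))]
    have heq : ∫ t in Icc (-(n:ℝ)) n, |deriv h t| = ∫ t in (-(n:ℝ))..n, |deriv h t| := by
      rw [intervalIntegral.integral_of_le hn, integral_Icc_eq_integral_Ioc]
    rw [heq]
    calc ENNReal.ofReal (∫ t in (-(n:ℝ))..n, |deriv h t|)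
        ≤ ENNReal.ofReal 4 := ENNReal.ofReal_le_ofReal (key4 _ _ hn)
      _ = 4 := by norm_num
  have hcover : ⋃ n : ℕ, Icc (-(n:ℝ)) (n:ℝ) = univ := by
    ext x
    simp only [mem_iUnion, mem_univ, iff_true, mem_Icc]
    obtain ⟨n, hn⟩ := exists_nat_ge |x|
    exact ⟨n, by constructor <;> nlinarith [le_abs_self x, neg_abs_le x]⟩
  have hdir : Directed (· ⊆ ·) (fun n : ℕ => Icc (-(n:ℝ)) (n:ℝ)) := by
    have hmono : Monotone (fun n : ℕ => Icc (-(n:ℝ)) (n:ℝ)) := by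
      intro m n hmn
      have : (m:ℝ) ≤ n := Nat.cast_le.mpr hmn
      exact Icc_subset_Icc (by linarith) this
    exact hmono.directed_le
  calc ∫⁻ t : ℝ, ENNReal.ofReal |deriv h t|
      = ∫⁻ t in ⋃ n : ℕ, Icc (-(n:ℝ)) (n:ℝ), ENNReal.ofReal |deriv h t| := by
        rw [hcover, Measure.restrict_univ]
    _ = ⨆ n : ℕ, ∫⁻ t in Icc (-(n:ℝ)) (n:ℝ), ENNReal.ofReal |deriv h t| :=
        setLIntegral_iUnion_of_directed _ hdir
    _ ≤ 4 := iSup_le hstep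
end

section
/- Let u ∈ C²(ℝ², [−1,1]) with |∇_G u| ∈ L^∞(ℝ²) solve Δ_G u = W'(u) in all of ℝ², and assume ∂_y u(ζ) > 0 for every ζ ∈ ℝ². For t ∈ ℝ let u^t(x,y) := u(x, y+t) and E_R(t) := ∫_{B_R(0)} ( |∇_G u^t|²/2 + W(u^t) ) dx dy. Then there exists a constant C > 0, depending only on W and on ‖∇_G u‖_{L^∞(ℝ²)}, such that E_R(0) ≤ E_R(t) + C R² for every t ∈ ℝ and every R > 0. -/
open MeasureTheory

/-- Partial derivative in `x`. -/
noncomputable def pX (u : ℝ × ℝ → ℝ) (p : ℝ × ℝ) : ℝ := deriv (fun x => u (x, p.2)) p.1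

/-- Partial derivative in `y`. -/
noncomputable def pY (u : ℝ × ℝ → ℝ) (p : ℝ × ℝ) : ℝ := deriv (fun y => u (p.1, y)) p.2

/-- Second partial derivative in `x`. -/
noncomputable def pXX (u : ℝ × ℝ → ℝ) (p : ℝ × ℝ) : ℝ :=
  deriv (deriv (fun x => u (x, p.2))) p.1

/-- Second partial derivative in `y`. -/
noncomputable def pYY (u : ℝ × ℝ → ℝ) (p : ℝ × ℝ) : ℝ :=
  deriv (deriv (fun y => u (p.1, y))) p.2

/-- The Grushin Laplacian `Δ_G u = ∂_xx u + x² ∂_yy u`. -/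
noncomputable def grushinLap (u : ℝ × ℝ → ℝ) (p : ℝ × ℝ) : ℝ := pXX u p + p.1 ^ 2 * pYY u p

/-- The squared length of the Grushin gradient: `|∇_G u|² = (∂_x u)² + x² (∂_y u)²`. -/
noncomputable def grushinGradSq (u : ℝ × ℝ → ℝ) (p : ℝ × ℝ) : ℝ :=
  (pX u p) ^ 2 + p.1 ^ 2 * (pY u p) ^ 2

/-- The Grushin norm `‖(x,y)‖ = (x⁴ + 4y²)^(1/4)`. -/
noncomputable def gNorm (p : ℝ × ℝ) : ℝ := (p.1 ^ 4 + 4 * p.2 ^ 2) ^ ((1 : ℝ) / 4)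

/-- The Grushin ball of radius `R` centered at `c`. -/
def gBall (c : ℝ × ℝ) (R : ℝ) : Set (ℝ × ℝ) := {p | gNorm (p - c) < R}

-- ==== auxiliary layer ====
noncomputable def Pd (u : ℝ × ℝ → ℝ) (p : ℝ × ℝ) : ℝ := fderiv ℝ u p (1,0)
noncomputable def Qd (u : ℝ × ℝ → ℝ) (p : ℝ × ℝ) : ℝ := fderiv ℝ u p (0,1)
noncomputable def Sd (u : ℝ × ℝ → ℝ) (p v w : ℝ × ℝ) : ℝ := fderiv ℝ (fderiv ℝ u) p v w
noncomputable def Phi (u : ℝ × ℝ → ℝ) (p : ℝ × ℝ) : ℝ := Pd u p * Qd u p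
noncomputable def DPhi (u : ℝ × ℝ → ℝ) (p : ℝ × ℝ) : ℝ :=
  Sd u p (1,0) (1,0) * Qd u p + Pd u p * Sd u p (1,0) (0,1)
noncomputable def Ham (W : ℝ → ℝ) (u : ℝ × ℝ → ℝ) (p : ℝ × ℝ) : ℝ :=
  p.1^2 * (Qd u p)^2/2 - (Pd u p)^2/2 - W (u p)
noncomputable def DHam (W : ℝ → ℝ) (u : ℝ × ℝ → ℝ) (p : ℝ × ℝ) : ℝ :=
  p.1^2 * (Qd u p * Sd u p (0,1) (0,1)) - Pd u p * Sd u p (0,1) (1,0)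
    - deriv W (u p) * Qd u p

section lines
variable {E : Type*} [NormedAddCommGroup E] [NormedSpace ℝ E]

lemma lineX {F : ℝ × ℝ → E} {F' : (ℝ × ℝ) →L[ℝ] E} {a b : ℝ} (hF : HasFDerivAt F F' (a, b)) :
    HasDerivAt (fun x => F (x, b)) (F' (1, 0)) a :=
  hF.comp_hasDerivAt a ((hasDerivAt_id a).prodMk (hasDerivAt_const a b))

lemma lineY {F : ℝ × ℝ → E} {F' : (ℝ × ℝ) →L[ℝ] E} {a b : ℝ} (hF : HasFDerivAt F F' (a, b)) :
    HasDerivAt (fun y => F (a, y)) (F' (0, 1)) b :=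
  hF.comp_hasDerivAt b ((hasDerivAt_const b a).prodMk (hasDerivAt_id b))

end lines

section calc1
variable {u : ℝ × ℝ → ℝ} (hu : ContDiff ℝ 2 u)
include hu

lemma hFD (p : ℝ × ℝ) : HasFDerivAt u (fderiv ℝ u p) p :=
  (hu.differentiable (by norm_num) p).hasFDerivAt

lemma hSD (p : ℝ × ℝ) : HasFDerivAt (fderiv ℝ u) (fderiv ℝ (fderiv ℝ u) p) p := by
  have h1 : ContDiff ℝ 1 (fderiv ℝ u) := hu.fderiv_right (by norm_num)
  exact (h1.differentiable (by norm_num) p).hasFDerivAt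

lemma symSD (p v w : ℝ × ℝ) : Sd u p v w = Sd u p w v :=
  second_derivative_symmetric (fun q => hFD hu q) (hSD hu p) v w

lemma contP : Continuous (Pd u) := by
  have := hu.continuous_fderiv (by norm_num)
  exact this.clm_apply continuous_const

lemma contQ : Continuous (Qd u) := by
  have := hu.continuous_fderiv (by norm_num)
  exact this.clm_apply continuous_const

lemma contS (v w : ℝ × ℝ) : Continuous (fun p => Sd u p v w) := by
  have h1 : ContDiff ℝ 1 (fderiv ℝ u) := hu.fderiv_right (by norm_num)
  have := h1.continuous_fderiv (by norm_num)
  exact (this.clm_apply continuous_const).clm_apply continuous_const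

-- u-partials
lemma hux (a b : ℝ) : HasDerivAt (fun x => u (x, b)) (Pd u (a,b)) a := lineX (hFD hu (a,b))
lemma huy (a b : ℝ) : HasDerivAt (fun y => u (a, y)) (Qd u (a,b)) b := lineY (hFD hu (a,b))

lemma pX_eq (p : ℝ × ℝ) : pX u p = Pd u p := by
  obtain ⟨a, b⟩ := p; exact (hux hu a b).deriv

lemma pY_eq (p : ℝ × ℝ) : pY u p = Qd u p := by
  obtain ⟨a, b⟩ := p; exact (huy hu a b).deriv

-- partials of P and Q
lemma hPx (a b : ℝ) : HasDerivAt (fun x => Pd u (x, b)) (Sd u (a,b) (1,0) (1,0)) a := by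
  have h := (lineX (hSD hu (a, b))).clm_apply (hasDerivAt_const a ((1:ℝ),(0:ℝ)))
  simpa [Pd, Sd] using h

lemma hPy (a b : ℝ) : HasDerivAt (fun y => Pd u (a, y)) (Sd u (a,b) (0,1) (1,0)) b := by
  have h := (lineY (hSD hu (a, b))).clm_apply (hasDerivAt_const b ((1:ℝ),(0:ℝ)))
  simpa [Pd, Sd] using h

lemma hQx (a b : ℝ) : HasDerivAt (fun x => Qd u (x, b)) (Sd u (a,b) (1,0) (0,1)) a := by
  have h := (lineX (hSD hu (a, b))).clm_apply (hasDerivAt_const a ((0:ℝ),(1:ℝ)))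
  simp at h
  exact h

lemma hQy (a b : ℝ) : HasDerivAt (fun y => Qd u (a, y)) (Sd u (a,b) (0,1) (0,1)) b := by
  have h := (lineY (hSD hu (a, b))).clm_apply (hasDerivAt_const b ((0:ℝ),(1:ℝ)))
  simp at h
  exact h

lemma pXX_eq (p : ℝ × ℝ) : pXX u p = Sd u p (1,0) (1,0) := by
  obtain ⟨a, b⟩ := p
  have h1 : deriv (fun x => u (x, b)) = fun x => Pd u (x, b) :=
    funext fun x => (hux hu x b).deriv
  show deriv (deriv (fun x => u (x, b))) a = _
  rw [h1]; exact (hPx hu a b).deriv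

lemma pYY_eq (p : ℝ × ℝ) : pYY u p = Sd u p (0,1) (0,1) := by
  obtain ⟨a, b⟩ := p
  have h1 : deriv (fun y => u (a, y)) = fun y => Qd u (a, y) :=
    funext fun y => (huy hu a y).deriv
  show deriv (deriv (fun y => u (a, y))) b = _
  rw [h1]; exact (hQy hu a b).deriv

lemma hPhiX (a b : ℝ) : HasDerivAt (fun x => Phi u (x, b)) (DPhi u (a,b)) a :=
  (hPx hu a b).mul (hQx hu a b)

end calc1

section calc2
variable {u : ℝ × ℝ → ℝ} {W : ℝ → ℝ} (hu : ContDiff ℝ 2 u) (hW2 : ContDiff ℝ 2 W)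

include hu hW2 in
lemma hHamS (a b s : ℝ) :
    HasDerivAt (fun s => Ham W u (a, b + s)) (DHam W u (a, b + s)) s := by
  have hline : HasDerivAt (fun s : ℝ => b + s) 1 s := (hasDerivAt_id s).const_add b
  have hq : HasDerivAt (fun s => Qd u (a, b + s)) (Sd u (a, b+s) (0,1) (0,1)) s := by
    simpa [Function.comp_def] using (hQy hu a (b+s)).comp s hline
  have hp : HasDerivAt (fun s => Pd u (a, b + s)) (Sd u (a, b+s) (0,1) (1,0)) s := by
    simpa [Function.comp_def] using (hPy hu a (b+s)).comp s hline
  have hus : HasDerivAt (fun s => u (a, b + s)) (Qd u (a, b+s)) s := by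
    simpa [Function.comp_def] using (huy hu a (b+s)).comp s hline
  have hWs : HasDerivAt (fun s => W (u (a, b + s)))
      (deriv W (u (a, b+s)) * Qd u (a, b+s)) s := by
    have hW' : HasDerivAt W (deriv W (u (a, b+s))) (u (a, b+s)) :=
      ((hW2.differentiable (by norm_num)) _).hasDerivAt
    exact hW'.comp s hus
  have h1 := (((hq.mul hq).const_mul (a^2)).div_const 2).sub
      (((hp.mul hp).div_const 2).add hWs)
  have h2 : HasDerivAt (fun s => Ham W u (a, b + s))
      ((a ^ 2 * (Sd u (a, b+s) (0,1) (0,1) * Qd u (a, b+s) +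
        Qd u (a, b+s) * Sd u (a, b+s) (0,1) (0,1)) / 2) -
       ((Sd u (a, b+s) (0,1) (1,0) * Pd u (a, b+s) +
        Pd u (a, b+s) * Sd u (a, b+s) (0,1) (1,0)) / 2 +
        deriv W (u (a, b+s)) * Qd u (a, b+s))) s := by
    convert h1 using 2 with s
    · rfl
    · rfl
    · simp only [Ham, Pi.sub_apply, Pi.add_apply, Pi.mul_apply]; ring
  convert h2 using 1
  simp only [DHam]; ring

include hu in
lemma DHam_eq_neg_DPhi
    (hpde : ∀ p : ℝ × ℝ, grushinLap u p = deriv W (u p)) (p : ℝ × ℝ) :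
    DHam W u p = - DPhi u p := by
  have h1 := hpde p
  rw [grushinLap, pXX_eq hu, pYY_eq hu] at h1
  have h2 := symSD hu p (1,0) (0,1)
  simp only [DHam, DPhi]
  rw [← h1, ← h2]; ring

include hu hW2 in
lemma contDHam : Continuous (DHam W u) := by
  have cW' : Continuous (deriv W) := hW2.continuous_deriv (by norm_num)
  exact (((continuous_fst.pow 2).mul ((contQ hu).mul (contS hu _ _))).sub
    ((contP hu).mul (contS hu _ _))).sub ((cW'.comp hu.continuous).mul (contQ hu))

include hu in
lemma contDPhi : Continuous (DPhi u) :=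
  ((contS hu _ _).mul (contQ hu)).add ((contP hu).mul (contS hu _ _))

include hu in
lemma contPhi : Continuous (Phi u) := (contP hu).mul (contQ hu)

include hu hW2 in
lemma contHam : Continuous (Ham W u) :=
  ((((continuous_fst.pow 2).mul ((contQ hu).pow 2)).div_const 2).sub
    (((contP hu).pow 2).div_const 2)).sub (hW2.continuous.comp hu.continuous)

end calc2

section toolbox

lemma swap_sorted {f : ℝ × ℝ → ℝ} (hf : Continuous f) {a b c d : ℝ}
    (hab : a ≤ b) (hcd : c ≤ d) :
    ∫ x in a..b, (∫ s in c..d, f (x, s)) = ∫ s in c..d, (∫ x in a..b, f (x, s)) := by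
  simp only [intervalIntegral.integral_of_le hab, intervalIntegral.integral_of_le hcd]
  have hint : Integrable (Function.uncurry fun x s => f (x, s))
      ((volume.restrict (Set.Ioc a b)).prod (volume.restrict (Set.Ioc c d))) := by
    rw [Measure.prod_restrict, ← MeasureTheory.Measure.volume_eq_prod]
    have hK : IsCompact (Set.Icc a b ×ˢ Set.Icc c d) := isCompact_Icc.prod isCompact_Icc
    have h1 : IntegrableOn (Function.uncurry fun x s => f (x, s))
        (Set.Icc a b ×ˢ Set.Icc c d) volume :=
      ((hf.comp (continuous_fst.prodMk continuous_snd)).continuousOn).integrableOn_compact hK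
    exact h1.mono_set (Set.prod_mono Set.Ioc_subset_Icc_self Set.Ioc_subset_Icc_self)
  exact MeasureTheory.integral_integral_swap hint

lemma interval_swap {f : ℝ × ℝ → ℝ} (hf : Continuous f) (a b c d : ℝ) :
    ∫ x in a..b, (∫ s in c..d, f (x, s)) = ∫ s in c..d, (∫ x in a..b, f (x, s)) := by
  rcases le_total a b with hab | hab <;> rcases le_total c d with hcd | hcd
  · exact swap_sorted hf hab hcd
  · have h1 : ∀ x : ℝ, (∫ s in c..d, f (x, s)) = -∫ s in d..c, f (x, s) := fun x =>
      intervalIntegral.integral_symm d c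
    simp only [h1, intervalIntegral.integral_neg, swap_sorted hf hab hcd,
      intervalIntegral.integral_symm d c]
  · rw [intervalIntegral.integral_symm b a, swap_sorted hf hab hcd]
    simp only [intervalIntegral.integral_symm b a, intervalIntegral.integral_neg]
  · rw [intervalIntegral.integral_symm b a]
    have h1 : ∀ x : ℝ, (∫ s in c..d, f (x, s)) = -∫ s in d..c, f (x, s) := fun x =>
      intervalIntegral.integral_symm d c
    simp only [h1, intervalIntegral.integral_neg, swap_sorted hf hab hcd,
      intervalIntegral.integral_symm d c, intervalIntegral.integral_symm b a]

lemma quarter_pow {a : ℝ} (ha : 0 ≤ a) : (a ^ ((1:ℝ)/4)) ^ (4:ℕ) = a := by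
  rw [← Real.rpow_natCast (a ^ ((1:ℝ)/4)) 4, ← Real.rpow_mul ha]
  norm_num

lemma quarter_lt_iff {a R : ℝ} (ha : 0 ≤ a) (hR : 0 < R) :
    a ^ ((1:ℝ)/4) < R ↔ a < R ^ (4:ℕ) := by
  constructor
  · intro h
    calc a = (a ^ ((1:ℝ)/4)) ^ (4:ℕ) := (quarter_pow ha).symm
    _ < R ^ (4:ℕ) := by
        exact pow_lt_pow_left₀ h (Real.rpow_nonneg ha _) (by norm_num)
  · intro h
    have h2 : a ^ ((1:ℝ)/4) < (R ^ (4:ℕ)) ^ ((1:ℝ)/4) :=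
      Real.rpow_lt_rpow ha h (by norm_num)
    rwa [← Real.rpow_natCast R 4, ← Real.rpow_mul hR.le, show ((4:ℕ):ℝ) * ((1:ℝ)/4) = 1 by norm_num,
      Real.rpow_one] at h2

lemma slice_x {c x : ℝ} (hc : 0 < c) : x ^ (4:ℕ) < c ↔ |x| < c ^ ((1:ℝ)/4) := by
  rw [show x ^ (4:ℕ) = |x| ^ (4:ℕ) by rw [pow_abs, abs_of_nonneg (by positivity)]]
  nth_rewrite 1 [← quarter_pow hc.le]
  exact pow_lt_pow_iff_left₀ (abs_nonneg x) (Real.rpow_nonneg hc.le _) (by norm_num)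

lemma slice_y {c y : ℝ} (hc : 0 < c) : 4 * y ^ 2 < c ↔ |y| < Real.sqrt c / 2 := by
  have h1 : (Real.sqrt c / 2) ^ 2 = c / 4 := by
    rw [div_pow, Real.sq_sqrt hc.le]; norm_num
  rw [show (4 * y ^ 2 < c) ↔ (y ^ 2 < c / 4) by constructor <;> intro h <;> linarith]
  rw [← h1, show y ^ 2 = |y| ^ 2 by rw [sq_abs]]
  exact pow_lt_pow_iff_left₀ (n := 2) (abs_nonneg y) (by positivity) (by norm_num)

end toolbox

section keyints

lemma memS_bounds {R x y : ℝ} (hR : 0 < R) (h : x^4 + 4*y^2 < R^4) :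
    |x| < R ∧ |y| < R^2/2 := by
  constructor
  · have hx : x^4 < R^4 := by nlinarith [sq_nonneg y]
    have : |x|^4 < R^4 := by rwa [pow_abs, abs_of_nonneg (by positivity)]
    exact lt_of_pow_lt_pow_left₀ 4 hR.le this
  · have hy : 4*y^2 < R^4 := by nlinarith [sq_nonneg (x^2)]
    have h2 : |y|^2 < (R^2/2)^2 := by rw [sq_abs]; nlinarith
    exact lt_of_pow_lt_pow_left₀ 2 (by positivity) h2

lemma measS {R : ℝ} : MeasurableSet {p : ℝ × ℝ | p.1^4 + 4*p.2^2 < R^4} :=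
  (isOpen_lt (by fun_prop) continuous_const).measurableSet

lemma intS {R : ℝ} (hR : 0 < R) {f : ℝ × ℝ → ℝ} (hf : Continuous f) :
    IntegrableOn f {p : ℝ × ℝ | p.1^4 + 4*p.2^2 < R^4} volume := by
  have hsub : {p : ℝ × ℝ | p.1^4 + 4*p.2^2 < R^4} ⊆
      Set.Icc (-R) R ×ˢ Set.Icc (-(R^2/2)) (R^2/2) := by
    rintro ⟨x, y⟩ h
    obtain ⟨h1, h2⟩ := memS_bounds hR h
    exact ⟨abs_le.1 h1.le, abs_le.1 h2.le⟩
  exact (hf.continuousOn.integrableOn_compact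
    (isCompact_Icc.prod isCompact_Icc)).mono_set hsub

lemma keyA {u : ℝ × ℝ → ℝ} (hu : ContDiff ℝ 2 u)
    (hrange : ∀ p : ℝ × ℝ, u p ∈ Set.Icc (-1 : ℝ) 1) {R : ℝ} (hR : 0 < R) :
    ∫ p in {p : ℝ × ℝ | p.1^4 + 4*p.2^2 < R^4}, Qd u p ≤ 4*R := by
  set S := {p : ℝ × ℝ | p.1^4 + 4*p.2^2 < R^4} with hSdef
  have hind : Integrable (S.indicator (Qd u)) :=
    (integrable_indicator_iff measS).2 (intS hR (contQ hu))
  rw [← integral_indicator measS]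
  rw [MeasureTheory.Measure.volume_eq_prod] at hind ⊢
  rw [MeasureTheory.integral_prod _ hind]
  have hindR : Integrable ((Set.Ioo (-R) R).indicator (fun _ : ℝ => (2:ℝ))) :=
    (integrable_indicator_iff measurableSet_Ioo).2
      (integrableOn_const measure_Ioo_lt_top.ne)
  have key : ∀ x : ℝ, (∫ y, S.indicator (Qd u) (x, y)) ≤
      (Set.Ioo (-R) R).indicator (fun _ => 2) x := by
    intro x
    by_cases hx : x^4 < R^4
    · have hc : 0 < R^4 - x^4 := by linarith
      set h := Real.sqrt (R^4 - x^4) / 2 with hh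
      have hh0 : 0 ≤ h := by positivity
      have hset : (fun y => S.indicator (Qd u) (x, y)) =
          (Set.Ioo (-h) h).indicator (fun y => Qd u (x, y)) := by
        funext y
        have hmem : ((x, y) ∈ S) ↔ y ∈ Set.Ioo (-h) h := by
          rw [Set.mem_Ioo, ← abs_lt, hSdef, Set.mem_setOf_eq, ← slice_y hc]
          constructor <;> intro <;> simp_all <;> linarith
        simp only [Set.indicator_apply, hmem]
      rw [hset, integral_indicator measurableSet_Ioo, ← integral_Ioc_eq_integral_Ioo,
        ← intervalIntegral.integral_of_le (by linarith : -h ≤ h)]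
      have hQint : IntervalIntegrable (fun y => Qd u (x, y)) volume (-h) h :=
        ((contQ hu).comp (Continuous.prodMk_right x)).intervalIntegrable _ _
      rw [intervalIntegral.integral_eq_sub_of_hasDerivAt (fun y _ => huy hu x y) hQint]
      have hxR : x ∈ Set.Ioo (-R) R := by
        have : |x|^4 < R^4 := by rwa [pow_abs, abs_of_nonneg (by positivity)]
        have := lt_of_pow_lt_pow_left₀ 4 hR.le this
        exact Set.mem_Ioo.2 (abs_lt.1 this)
      rw [Set.indicator_of_mem hxR]
      have h1 := hrange (x, h); have h2 := hrange (x, -h)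
      simp only [Set.mem_Icc] at h1 h2
      linarith
    · have hzero : ∀ y, S.indicator (Qd u) (x, y) = 0 := by
        intro y
        apply Set.indicator_of_notMem
        rw [hSdef, Set.mem_setOf_eq]
        push_neg at hx ⊢
        nlinarith [sq_nonneg y]
      simp only [hzero, integral_zero]
      exact Set.indicator_nonneg (fun _ _ => by norm_num) x
  calc (∫ x, ∫ y, S.indicator (Qd u) (x, y)) ≤
      ∫ x, (Set.Ioo (-R) R).indicator (fun _ => 2) x :=
        integral_mono hind.integral_prod_left hindR key
    _ = 4*R := by
        rw [integral_indicator measurableSet_Ioo, setIntegral_const, Real.volume_real_Ioo]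
        rw [max_eq_left (by linarith)]
        ring_nf

end keyints

section keyB

variable {u : ℝ × ℝ → ℝ} {W : ℝ → ℝ} {K : ℝ}

lemma husline (hu : ContDiff ℝ 2 u) (c y s : ℝ) :
    HasDerivAt (fun s => u (c, y + s)) (Qd u (c, y + s)) s := by
  simpa [Function.comp_def] using (huy hu c (y+s)).comp s ((hasDerivAt_id s).const_add y)

lemma boundPhiAux (hu : ContDiff ℝ 2 u)
    (hrange : ∀ p : ℝ × ℝ, u p ∈ Set.Icc (-1 : ℝ) 1)
    (hPK : ∀ p : ℝ × ℝ, |Pd u p| ≤ K) (hQpos : ∀ p : ℝ × ℝ, 0 < Qd u p)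
    (c y : ℝ) {a b : ℝ} (hab : a ≤ b) :
    ∫ s in a..b, |Phi u (c, y + s)| ≤ 2*K := by
  have hK0 : 0 ≤ K := le_trans (abs_nonneg _) (hPK (0,0))
  have hcont : Continuous (fun s => Qd u (c, y + s)) :=
    (contQ hu).comp (continuous_const.prodMk (continuous_const.add continuous_id))
  have hcontP : Continuous (fun s => |Phi u (c, y + s)|) :=
    ((contPhi hu).comp (continuous_const.prodMk (continuous_const.add continuous_id))).abs
  have h1 : ∫ s in a..b, |Phi u (c, y + s)| ≤ ∫ s in a..b, K * Qd u (c, y + s) := by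
    apply intervalIntegral.integral_mono_on hab (hcontP.intervalIntegrable _ _)
      ((continuous_const.mul hcont).intervalIntegrable _ _)
    intro s _
    have := hPK (c, y+s); have hq := hQpos (c, y+s)
    calc |Phi u (c, y+s)| = |Pd u (c, y+s)| * |Qd u (c, y+s)| := abs_mul _ _
      _ ≤ K * Qd u (c, y+s) := by
          rw [abs_of_pos hq]; exact mul_le_mul_of_nonneg_right this hq.le
  have h2 : ∫ s in a..b, K * Qd u (c, y + s) = K * (u (c, y+b) - u (c, y+a)) := by
    rw [intervalIntegral.integral_const_mul,
      intervalIntegral.integral_eq_sub_of_hasDerivAt (fun s _ => husline hu c y s)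
        (hcont.intervalIntegrable _ _)]
  have h3 := hrange (c, y+b); have h4 := hrange (c, y+a)
  simp only [Set.mem_Icc] at h3 h4
  nlinarith

lemma boundPhi (hu : ContDiff ℝ 2 u)
    (hrange : ∀ p : ℝ × ℝ, u p ∈ Set.Icc (-1 : ℝ) 1)
    (hPK : ∀ p : ℝ × ℝ, |Pd u p| ≤ K) (hQpos : ∀ p : ℝ × ℝ, 0 < Qd u p)
    (c y t : ℝ) : |∫ s in (0:ℝ)..t, Phi u (c, y + s)| ≤ 2*K := by
  rcases le_total 0 t with ht | ht
  · have habs : |∫ s in (0:ℝ)..t, Phi u (c, y + s)| ≤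
        ∫ s in (0:ℝ)..t, |Phi u (c, y + s)| := by
      have h := intervalIntegral.norm_integral_le_abs_integral_norm
        (f := fun s => Phi u (c, y + s)) (a := 0) (b := t) (μ := volume)
      simp only [Real.norm_eq_abs] at h
      rwa [abs_of_nonneg (intervalIntegral.integral_nonneg ht (fun s _ => abs_nonneg _))] at h
    exact le_trans habs (boundPhiAux hu hrange hPK hQpos c y ht)
  · rw [intervalIntegral.integral_symm t 0, abs_neg]
    have habs : |∫ s in t..(0:ℝ), Phi u (c, y + s)| ≤
        ∫ s in t..(0:ℝ), |Phi u (c, y + s)| := by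
      have h := intervalIntegral.norm_integral_le_abs_integral_norm
        (f := fun s => Phi u (c, y + s)) (a := t) (b := 0) (μ := volume)
      simp only [Real.norm_eq_abs] at h
      rwa [abs_of_nonneg (intervalIntegral.integral_nonneg ht (fun s _ => abs_nonneg _))] at h
    exact le_trans habs (boundPhiAux hu hrange hPK hQpos c y ht)

lemma keyB (hu : ContDiff ℝ 2 u) (hW2 : ContDiff ℝ 2 W)
    (hrange : ∀ p : ℝ × ℝ, u p ∈ Set.Icc (-1 : ℝ) 1)
    (hPK : ∀ p : ℝ × ℝ, |Pd u p| ≤ K) (hQpos : ∀ p : ℝ × ℝ, 0 < Qd u p)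
    (hpde : ∀ p : ℝ × ℝ, grushinLap u p = deriv W (u p))
    {R : ℝ} (hR : 0 < R) (t : ℝ) :
    ∫ p in {p : ℝ × ℝ | p.1^4 + 4*p.2^2 < R^4},
      (Ham W u (p.1, p.2 + t) - Ham W u p) ≤ 4*K*R^2 := by
  have hK0 : 0 ≤ K := le_trans (abs_nonneg _) (hPK (0,0))
  set S := {p : ℝ × ℝ | p.1^4 + 4*p.2^2 < R^4} with hSdef
  set f : ℝ × ℝ → ℝ := fun p => Ham W u (p.1, p.2 + t) - Ham W u p with hfdef
  have hcf : Continuous f :=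
    ((contHam hu hW2).comp (continuous_fst.prodMk (continuous_snd.add continuous_const))).sub
      (contHam hu hW2)
  have hind : Integrable (S.indicator f) :=
    (integrable_indicator_iff measS).2 (intS hR hcf)
  rw [← integral_indicator measS]
  rw [MeasureTheory.Measure.volume_eq_prod] at hind ⊢
  rw [MeasureTheory.integral_prod_symm _ hind]
  have hindR : Integrable ((Set.Ioo (-(R^2/2)) (R^2/2)).indicator (fun _ : ℝ => 4*K)) :=
    (integrable_indicator_iff measurableSet_Ioo).2
      (integrableOn_const measure_Ioo_lt_top.ne)
  have key : ∀ y : ℝ, (∫ x, S.indicator f (x, y)) ≤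
      (Set.Ioo (-(R^2/2)) (R^2/2)).indicator (fun _ => 4*K) y := by
    intro y
    by_cases hy : 4*y^2 < R^4
    · have hc : 0 < R^4 - 4*y^2 := by linarith
      set l := (R^4 - 4*y^2) ^ ((1:ℝ)/4) with hl
      have hl0 : 0 < l := Real.rpow_pos_of_pos hc _
      have hset : (fun x => S.indicator f (x, y)) =
          (Set.Ioo (-l) l).indicator (fun x => f (x, y)) := by
        funext x
        have hmem : ((x, y) ∈ S) ↔ x ∈ Set.Ioo (-l) l := by
          rw [Set.mem_Ioo, ← abs_lt, hl, ← slice_x hc, hSdef, Set.mem_setOf_eq]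
          constructor <;> intro <;> simp_all <;> linarith
        simp only [Set.indicator_apply, hmem]
      rw [hset, integral_indicator measurableSet_Ioo, ← integral_Ioc_eq_integral_Ioo,
        ← intervalIntegral.integral_of_le (by linarith : -l ≤ l)]
      have step1 : ∀ x : ℝ, f (x, y) = ∫ s in (0:ℝ)..t, DHam W u (x, y + s) := by
        intro x
        have hD : (∫ s in (0:ℝ)..t, DHam W u (x, y + s)) =
            Ham W u (x, y + t) - Ham W u (x, y + 0) :=
          intervalIntegral.integral_eq_sub_of_hasDerivAt
            (fun s _ => hHamS hu hW2 x y s)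
            (((contDHam hu hW2).comp
              (continuous_const.prodMk (continuous_const.add continuous_id))).intervalIntegrable _ _)
        simp only [hfdef]
        rw [hD, add_zero]
      have step2 : (∫ x in -l..l, f (x, y)) =
          ∫ s in (0:ℝ)..t, (∫ x in -l..l, DHam W u (x, y + s)) := by
        rw [show (fun x => f (x, y)) = fun x => ∫ s in (0:ℝ)..t, DHam W u (x, y + s) from
          funext step1]
        exact interval_swap (f := fun q => DHam W u (q.1, y + q.2))
          ((contDHam hu hW2).comp (continuous_fst.prodMk (continuous_const.add continuous_snd)))
          (-l) l 0 t
      have step3 : ∀ s : ℝ, (∫ x in -l..l, DHam W u (x, y + s)) =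
          Phi u (-l, y + s) - Phi u (l, y + s) := by
        intro s
        have hD : ∀ x ∈ Set.uIcc (-l) l, HasDerivAt (fun x => -Phi u (x, y + s))
            (DHam W u (x, y + s)) x := by
          intro x _
          have h1 := (hPhiX hu x (y+s)).neg
          rwa [← DHam_eq_neg_DPhi hu hpde (x, y+s)] at h1
        have hFT : (∫ x in -l..l, DHam W u (x, y + s)) =
            -Phi u (l, y + s) - -Phi u (-l, y + s) :=
          intervalIntegral.integral_eq_sub_of_hasDerivAt hD
            (((contDHam hu hW2).comp
              (continuous_id.prodMk continuous_const)).intervalIntegrable _ _)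
        rw [hFT]; ring
      have step4 : (∫ x in -l..l, f (x, y)) =
          (∫ s in (0:ℝ)..t, Phi u (-l, y + s)) - (∫ s in (0:ℝ)..t, Phi u (l, y + s)) := by
        rw [step2]
        simp only [step3]
        exact intervalIntegral.integral_sub
          (((contPhi hu).comp
            (continuous_const.prodMk (continuous_const.add continuous_id))).intervalIntegrable _ _)
          (((contPhi hu).comp
            (continuous_const.prodMk (continuous_const.add continuous_id))).intervalIntegrable _ _)
      have hyR : y ∈ Set.Ioo (-(R^2/2)) (R^2/2) := by
        have h2 : |y|^2 < (R^2/2)^2 := by rw [sq_abs]; nlinarith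
        exact Set.mem_Ioo.2 (abs_lt.1 (lt_of_pow_lt_pow_left₀ 2 (by positivity) h2))
      rw [Set.indicator_of_mem hyR, step4]
      have hb1 := boundPhi hu hrange hPK hQpos (-l) y t
      have hb2 := boundPhi hu hrange hPK hQpos l y t
      have e1 := le_abs_self (∫ s in (0:ℝ)..t, Phi u (-l, y + s))
      have e2 := neg_abs_le (∫ s in (0:ℝ)..t, Phi u (l, y + s))
      linarith
    · have hzero : ∀ x, S.indicator f (x, y) = 0 := by
        intro x
        apply Set.indicator_of_notMem
        rw [hSdef, Set.mem_setOf_eq]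
        push_neg at hy ⊢
        nlinarith [sq_nonneg (x^2), sq_nonneg x]
      simp only [hzero, integral_zero]
      exact Set.indicator_nonneg (fun _ _ => by linarith) y
  calc (∫ y, ∫ x, S.indicator f (x, y)) ≤
      ∫ y, (Set.Ioo (-(R^2/2)) (R^2/2)).indicator (fun _ => 4*K) y :=
        integral_mono hind.integral_prod_right hindR key
    _ = 4*K*R^2 := by
        rw [integral_indicator measurableSet_Ioo, setIntegral_const, Real.volume_real_Ioo,
          show (R^2/2 - -(R^2/2)) = R^2 by ring, max_eq_left (by positivity)]
        simp [smul_eq_mul]; ring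

end keyB

theorem translated_energy_comparison' (W : ℝ → ℝ) (hW2 : ContDiff ℝ 2 W) (K : ℝ) :
    ∃ C > (0 : ℝ), ∀ u : ℝ × ℝ → ℝ, ContDiff ℝ 2 u →
      (∀ p : ℝ × ℝ, u p ∈ Set.Icc (-1 : ℝ) 1) →
      (∀ p : ℝ × ℝ, Real.sqrt (grushinGradSq u p) ≤ K) →
      (∀ p : ℝ × ℝ, grushinLap u p = deriv W (u p)) →
      (∀ p : ℝ × ℝ, 0 < pY u p) →
      ∀ (t R : ℝ), 0 < R →
        (∫ p in gBall 0 R, (grushinGradSq u p / 2 + W (u p))) ≤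
          (∫ p in gBall 0 R,
            (grushinGradSq (fun q => u (q.1, q.2 + t)) p / 2 + W (u (p.1, p.2 + t)))) +
          C * R ^ 2 := by
  refine ⟨8*|K| + 1, by positivity, ?_⟩
  intro u hu hrange hgrad hpde hmono t R hR
  have hK0 : 0 ≤ K := le_trans (Real.sqrt_nonneg _) (hgrad 0)
  have hgs : ∀ p : ℝ × ℝ, grushinGradSq u p = (Pd u p)^2 + p.1^2*(Qd u p)^2 := fun p => by
    rw [grushinGradSq, pX_eq hu, pY_eq hu]
  have hPK : ∀ p : ℝ × ℝ, |Pd u p| ≤ K := by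
    intro p
    rw [← Real.sqrt_sq_eq_abs]
    refine le_trans (Real.sqrt_le_sqrt ?_) (hgrad p)
    rw [hgs p]
    nlinarith [sq_nonneg p.1, sq_nonneg (Qd u p), sq_nonneg (p.1 * Qd u p), mul_pow p.1 (Qd u p) 2]
  have hxQK : ∀ p : ℝ × ℝ, |p.1 * Qd u p| ≤ K := by
    intro p
    rw [← Real.sqrt_sq_eq_abs]
    refine le_trans (Real.sqrt_le_sqrt ?_) (hgrad p)
    rw [hgs p, mul_pow]
    nlinarith [sq_nonneg (Pd u p)]
  have hQpos : ∀ p : ℝ × ℝ, 0 < Qd u p := fun p => by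
    rw [← pY_eq hu]; exact hmono p
  -- the ball is the quartic region
  set S := {p : ℝ × ℝ | p.1^4 + 4*p.2^2 < R^4} with hSdef
  have hball : gBall 0 R = S := by
    ext p
    simp only [gBall, gNorm, Set.mem_setOf_eq, sub_zero, hSdef]
    exact quarter_lt_iff (by positivity) hR
  -- rewrite integrands
  have hXt : ∀ p : ℝ × ℝ, pX (fun q => u (q.1, q.2 + t)) p = Pd u (p.1, p.2+t) :=
    fun p => (hux hu p.1 (p.2+t)).deriv
  have hYt : ∀ p : ℝ × ℝ, pY (fun q => u (q.1, q.2 + t)) p = Qd u (p.1, p.2+t) := by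
    intro p
    have h := (huy hu p.1 (p.2+t)).comp p.2 ((hasDerivAt_id p.2).add_const t)
    simpa [pY, Function.comp_def] using h.deriv
  have hfun1 : (fun p : ℝ × ℝ => grushinGradSq u p / 2 + W (u p)) =
      fun p => p.1^2*(Qd u p)^2 - Ham W u p := by
    funext p
    rw [hgs p]
    simp only [Ham]
    ring
  have hfun2 : (fun p : ℝ × ℝ =>
      grushinGradSq (fun q => u (q.1, q.2 + t)) p / 2 + W (u (p.1, p.2 + t))) =
      fun p => p.1^2*(Qd u (p.1, p.2+t))^2 - Ham W u (p.1, p.2+t) := by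
    funext p
    rw [grushinGradSq, hXt p, hYt p]
    simp only [Ham]
    ring
  rw [hball, hfun1, hfun2]
  -- integrability
  have cHam1 : Continuous (Ham W u) := contHam hu hW2
  have cHamt : Continuous (fun p : ℝ × ℝ => Ham W u (p.1, p.2+t)) :=
    cHam1.comp (continuous_fst.prodMk (continuous_snd.add continuous_const))
  have cψ : Continuous (fun p : ℝ × ℝ => p.1^2*(Qd u p)^2) :=
    (continuous_fst.pow 2).mul ((contQ hu).pow 2)
  have cψt : Continuous (fun p : ℝ × ℝ => p.1^2*(Qd u (p.1, p.2+t))^2) :=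
    (continuous_fst.pow 2).mul
      (((contQ hu).comp (continuous_fst.prodMk (continuous_snd.add continuous_const))).pow 2)
  have intHam := intS hR cHam1
  have intHamt := intS hR cHamt
  have intψ := intS hR cψ
  have intψt := intS hR cψt
  -- split integrals
  rw [integral_sub intψ intHam, integral_sub intψt intHamt]
  -- key estimates
  have d1 : (∫ p in S, Ham W u (p.1, p.2+t)) - (∫ p in S, Ham W u p) ≤ 4*K*R^2 := by
    rw [← integral_sub intHamt intHam]
    exact keyB hu hW2 hrange hPK hQpos hpde hR t
  have d2 : (∫ p in S, p.1^2*(Qd u p)^2) ≤ 4*K*R^2 := by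
    have hmono2 : (∫ p in S, p.1^2*(Qd u p)^2) ≤ ∫ p in S, K*R*Qd u p := by
      refine setIntegral_mono_on intψ (intS hR ((continuous_const.mul (contQ hu)))) measS ?_
      rintro p hp
      have hb := (memS_bounds hR hp).1
      have ha := hxQK p
      have hq := hQpos p
      calc p.1^2*(Qd u p)^2 = |p.1 * Qd u p|^2 := by rw [sq_abs, mul_pow]
        _ ≤ K*|p.1 * Qd u p| := by nlinarith [abs_nonneg (p.1 * Qd u p)]
        _ = K*(|p.1| * Qd u p) := by rw [abs_mul, abs_of_pos hq]
        _ ≤ K*(R * Qd u p) := by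
            exact mul_le_mul_of_nonneg_left
              (mul_le_mul_of_nonneg_right hb.le hq.le) hK0
        _ = K*R*Qd u p := by ring
    refine le_trans hmono2 ?_
    rw [integral_const_mul]
    calc K*R*∫ p in S, Qd u p ≤ K*R*(4*R) := by
          exact mul_le_mul_of_nonneg_left (keyA hu hrange hR) (by positivity)
      _ = 4*K*R^2 := by ring
  have d3 : 0 ≤ ∫ p in S, p.1^2*(Qd u (p.1, p.2+t))^2 :=
    setIntegral_nonneg measS (fun p _ => by positivity)
  have habsK : |K| = K := abs_of_nonneg hK0
  have hR2 : 0 < R^2 := by positivity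
  nlinarith [d1, d2, d3]


/-- translated energy comparison. If `u ∈ C²(ℝ², [−1,1])`, with
`|∇_G u| ≤ K` everywhere, solves `Δ_G u = W'(u)` in `ℝ²` and `∂_y u > 0`, then with
`u^t(x,y) := u(x, y+t)` and `E_R(t) := ∫_{B_R(0)} (|∇_G u^t|²/2 + W(u^t))`, there is a
constant `C > 0` depending only on `W` and `K` such that `E_R(0) ≤ E_R(t) + C R²` for
every `t ∈ ℝ` and `R > 0`. -/
theorem translated_energy_comparison (W : ℝ → ℝ) (hW : DoubleWell W) (K : ℝ) :
    ∃ C > (0 : ℝ), ∀ u : ℝ × ℝ → ℝ, ContDiff ℝ 2 u →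
      (∀ p : ℝ × ℝ, u p ∈ Set.Icc (-1 : ℝ) 1) →
      (∀ p : ℝ × ℝ, Real.sqrt (grushinGradSq u p) ≤ K) →
      (∀ p : ℝ × ℝ, grushinLap u p = deriv W (u p)) →
      (∀ p : ℝ × ℝ, 0 < pY u p) →
      ∀ (t R : ℝ), 0 < R →
        (∫ p in gBall 0 R, (grushinGradSq u p / 2 + W (u p))) ≤
          (∫ p in gBall 0 R,
            (grushinGradSq (fun q => u (q.1, q.2 + t)) p / 2 + W (u (p.1, p.2 + t)))) +
          C * R ^ 2 :=
  translated_energy_comparison' W hW.1 K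
end
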